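/- arXiv:1204.3083 — 9 statements merged into one kernel-verified Lean document; each statement's English description precedes it below -/
import Mathlib

section
/- Let C be a finite split category and let e ∈ End_C(X) and f ∈ End_C(Y) be idempotents. Then e and f are equivalent if and only if J(e) = J(f), i.e., if and only if Mor(C)∘e∘Mor(C) = Mor(C)∘f∘Mor(C). -/
open CategoryTheory

/-- The set of all morphisms of a category `C`, as a sigma type. -/
def Mor (C : Type*) [Category C] : Type _ := Σ (X Y : C), X ⟶ Y

/-- For a morphism `s : X ⟶ Y`, the set `Mor(C)∘s∘Mor(C) = { v∘s∘u }` of all morphisms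
factoring through `s` (in Lean's composition order: `u ≫ s ≫ v`). -/
def Jset {C : Type*} [Category C] {X Y : C} (s : X ⟶ Y) : Set (Mor C) :=
  { m | ∃ (W Z : C) (u : W ⟶ X) (v : Y ⟶ Z), m = ⟨W, Z, u ≫ s ≫ v⟩ }

/-- Equivalence of idempotents `e ∈ End(X)` and `f ∈ End(Y)`: there exist
`a : Y ⟶ X` with `a = e∘a∘f` (Lean: `a = f ≫ a ≫ e`) and `b : X ⟶ Y` with
`b = f∘b∘e` (Lean: `b = e ≫ b ≫ f`) such that `e = a∘b` (Lean: `e = b ≫ a`)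
and `f = b∘a` (Lean: `f = a ≫ b`). -/
def IdemEquiv {C : Type*} [Category C] {X Y : C} (e : X ⟶ X) (f : Y ⟶ Y) : Prop :=
  ∃ (a : Y ⟶ X) (b : X ⟶ Y),
    a = f ≫ a ≫ e ∧ b = e ≫ b ≫ f ∧ e = b ≫ a ∧ f = a ≫ b

/-- In a finite endomorphism monoid, a one-sided inverse within the local monoid
at an idempotent `f` is a two-sided inverse. -/
lemma two_sided_aux {C : Type*} [Category C] {Y : C} [Finite (Y ⟶ Y)]
    (f s t : Y ⟶ Y) (hfs : f ≫ s = s) (hsf : s ≫ f = s)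
    (hft : f ≫ t = t) (htf : t ≫ f = t) (hst : s ≫ t = f) :
    t ≫ s = f := by
  have hff : f ≫ f = f := by nth_rewrite 2 [← hst]; rw [← Category.assoc, hfs, hst]
  let M := {x : Y ⟶ Y // f ≫ x = x ∧ x ≫ f = x}
  have : Finite M := Subtype.finite
  let φ : M → M := fun x => ⟨x.1 ≫ t, by rw [← Category.assoc, x.2.1], by rw [Category.assoc, htf]⟩
  have hsurj : Function.Surjective φ := by
    intro y
    refine ⟨⟨y.1 ≫ s, by rw [← Category.assoc, y.2.1], by rw [Category.assoc, hsf]⟩, ?_⟩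
    apply Subtype.ext
    show (y.1 ≫ s) ≫ t = y.1
    rw [Category.assoc, hst, y.2.2]
  have hinj : Function.Injective φ := Finite.injective_iff_surjective.mpr hsurj
  have h1 : φ ⟨t ≫ s, by rw [← Category.assoc, hft], by rw [Category.assoc, hsf]⟩
      = φ ⟨f, hff, hff⟩ := by
    apply Subtype.ext
    show (t ≫ s) ≫ t = f ≫ t
    rw [Category.assoc, hst, htf, hft]
  exact congrArg Subtype.val (hinj h1)

/-- In a finite split category, idempotents `e` and `f` are equivalent
if and only if `J(e) = J(f)`, i.e. `Mor(C)∘e∘Mor(C) = Mor(C)∘f∘Mor(C)`. -/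
theorem statement4 {C : Type*} [Category C] [Finite C]
    [∀ X Y : C, Finite (X ⟶ Y)]
    (hsplit : ∀ {X Y : C} (s : X ⟶ Y), ∃ t : Y ⟶ X, s ≫ t ≫ s = s)
    {X Y : C} (e : X ⟶ X) (f : Y ⟶ Y) (he : e ≫ e = e) (hf : f ≫ f = f) :
    IdemEquiv e f ↔ Jset e = Jset f := by
  constructor
  · rintro ⟨a, b, ha, hb, heba, hfab⟩
    have hbf : b ≫ f = b := by
      nth_rewrite 1 [hb]; rw [Category.assoc, Category.assoc, hf, ← hb]
    have heb : e ≫ b = b := by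
      nth_rewrite 1 [hb]; rw [← Category.assoc, he, ← hb]
    have hfa : f ≫ a = a := by
      nth_rewrite 1 [ha]; rw [← Category.assoc, hf, ← ha]
    have hae : a ≫ e = a := by
      nth_rewrite 1 [ha]; rw [Category.assoc, Category.assoc, he, ← ha]
    ext m
    constructor
    · rintro ⟨W, Z, u, v, rfl⟩
      refine ⟨W, Z, u ≫ e ≫ b, a ≫ v, ?_⟩
      have : u ≫ e ≫ v = (u ≫ e ≫ b) ≫ f ≫ a ≫ v := by
        simp only [Category.assoc, reassoc_of% hbf, reassoc_of% heba.symm, reassoc_of% he]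
      rw [this]
    · rintro ⟨W, Z, u, v, rfl⟩
      refine ⟨W, Z, u ≫ f ≫ a, b ≫ v, ?_⟩
      have : u ≫ f ≫ v = (u ≫ f ≫ a) ≫ e ≫ b ≫ v := by
        simp only [Category.assoc, reassoc_of% hae, reassoc_of% hfab.symm, reassoc_of% hf]
      rw [this]
  · intro hJ
    -- extract e = u0 ≫ f ≫ v0
    have he_mem : (⟨X, X, e⟩ : Mor C) ∈ Jset f := by
      rw [← hJ]
      exact ⟨X, X, e, 𝟙 X, by rw [Category.comp_id, he]⟩
    obtain ⟨W, Z, u0, v0, hmem⟩ := he_mem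
    have hmem' : (⟨X, ⟨X, e⟩⟩ : Σ (A B : C), A ⟶ B) = ⟨W, ⟨Z, u0 ≫ f ≫ v0⟩⟩ := hmem
    injection hmem' with h1 h2
    subst h1
    injection eq_of_heq h2 with h3 h4
    subst h3
    have hu : u0 ≫ f ≫ v0 = e := (eq_of_heq h4).symm
    -- extract f = p0 ≫ e ≫ q0
    have hf_mem : (⟨Y, Y, f⟩ : Mor C) ∈ Jset e := by
      rw [hJ]
      exact ⟨Y, Y, f, 𝟙 Y, by rw [Category.comp_id, hf]⟩
    obtain ⟨W', Z', p0, q0, hmem2⟩ := hf_mem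
    have hmem2' : (⟨Y, ⟨Y, f⟩⟩ : Σ (A B : C), A ⟶ B) = ⟨W', ⟨Z', p0 ≫ e ≫ q0⟩⟩ := hmem2
    injection hmem2' with g1 g2
    subst g1
    injection eq_of_heq g2 with g3 g4
    subst g3
    have hp : p0 ≫ e ≫ q0 = f := (eq_of_heq g4).symm
    -- normalized witnesses
    have key1 : (e ≫ u0 ≫ f) ≫ (f ≫ v0 ≫ e) = e := by
      simp only [Category.assoc, reassoc_of% hf, reassoc_of% hu, reassoc_of% he, he]
    have key2 : ((f ≫ p0 ≫ e) ≫ (e ≫ u0 ≫ f)) ≫ ((f ≫ v0 ≫ e) ≫ (e ≫ q0 ≫ f)) = f := by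
      simp only [Category.assoc, reassoc_of% he, reassoc_of% hf, reassoc_of% hu,
        reassoc_of% hp, hf]
    have key3 : ((f ≫ v0 ≫ e) ≫ (e ≫ q0 ≫ f)) ≫ ((f ≫ p0 ≫ e) ≫ (e ≫ u0 ≫ f)) = f := by
      apply two_sided_aux f _ _ _ _ _ _ key2
      · simp only [Category.assoc, reassoc_of% hf]
      · simp only [Category.assoc, hf]
      · simp only [Category.assoc, reassoc_of% hf]
      · simp only [Category.assoc, hf]
    -- q₁ ≫ p₁ = e
    have hk : (e ≫ q0 ≫ f) ≫ (f ≫ p0 ≫ e) = e := by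
      have h4 : (e ≫ u0 ≫ f) ≫ (((f ≫ v0 ≫ e) ≫ (e ≫ q0 ≫ f)) ≫ ((f ≫ p0 ≫ e) ≫ (e ≫ u0 ≫ f))) ≫ (f ≫ v0 ≫ e)
          = (e ≫ u0 ≫ f) ≫ f ≫ (f ≫ v0 ≫ e) := by rw [key3]
      simp only [Category.assoc, reassoc_of% he, reassoc_of% hf, reassoc_of% hu, he, hf] at h4 ⊢
      exact h4
    -- f = v₁ ≫ u₁
    have hfvu : (f ≫ v0 ≫ e) ≫ (e ≫ u0 ≫ f) = f := by
      have h5 : (f ≫ v0 ≫ e) ≫ ((e ≫ q0 ≫ f) ≫ (f ≫ p0 ≫ e)) ≫ (e ≫ u0 ≫ f) = f := by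
        simp only [Category.assoc] at key3 ⊢; exact key3
      rw [hk] at h5
      simp only [Category.assoc, reassoc_of% he, he] at h5 ⊢
      exact h5
    refine ⟨f ≫ v0 ≫ e, e ≫ u0 ≫ f, ?_, ?_, key1.symm, hfvu.symm⟩
    · simp only [Category.assoc, reassoc_of% hf, he, hf]
    · simp only [Category.assoc, reassoc_of% he, hf]
end

section
/- Let C be a finite split category and let s, t be morphisms of C lying in the same J-class (i.e., Mor(C)∘s∘Mor(C) = Mor(C)∘t∘Mor(C)). If Mor(C)∘s ⊆ Mor(C)∘t, then Mor(C)∘s = Mor(C)∘t. -/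
open CategoryTheory

/-- For a morphism `s : X ⟶ Y`, the set `Mor(C)∘s := { v∘s | v : Y ⟶ Z }` (in Lean's
composition order: `s ≫ v`). -/
def Lset {C : Type*} [Category C] {X Y : C} (s : X ⟶ Y) : Set (Mor C) :=
  { m | ∃ (Z : C) (v : Y ⟶ Z), m = ⟨X, Z, s ≫ v⟩ }

/-- In a finite monoid, some positive power of any element is idempotent. -/
lemma exists_pow_idem {M : Type*} [Monoid M] [Finite M] (c : M) :
    ∃ N, 1 ≤ N ∧ c ^ (2 * N) = c ^ N := by
  obtain ⟨m, n, hmn, h⟩ := Finite.exists_ne_map_eq_of_infinite (fun k : ℕ => c ^ k)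
  wlog hlt : m < n generalizing m n
  · exact this n m hmn.symm h.symm (by omega)
  set d := n - m with hd
  have hd1 : 1 ≤ d := by omega
  have key : ∀ k j, m ≤ j → c ^ (j + k * d) = c ^ j := by
    intro k
    induction k with
    | zero => simp
    | succ k ih =>
      intro j hj
      have h1 : c ^ (j + d) = c ^ j := by
        have he : j + d = (j - m) + n := by omega
        rw [he, pow_add, ← h, ← pow_add]
        congr 1
        omega
      have he : j + (k + 1) * d = (j + d) + k * d := by ring
      rw [he, ih (j + d) (by omega), h1]
  refine ⟨(m + 1) * d, Nat.mul_pos (by omega) (by omega), ?_⟩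
  have he : 2 * ((m + 1) * d) = (m + 1) * d + (m + 1) * d := by ring
  rw [he]
  exact key (m + 1) ((m + 1) * d) (by nlinarith)

/-- In a finite split category, if `s` and `t` lie in the same
`J`-class (`Mor(C)∘s∘Mor(C) = Mor(C)∘t∘Mor(C)`) and `Mor(C)∘s ⊆ Mor(C)∘t`, then
`Mor(C)∘s = Mor(C)∘t`. -/
theorem statement7 {C : Type*} [Category C] [Finite C]
    [∀ X Y : C, Finite (X ⟶ Y)]
    (hsplit : ∀ {X Y : C} (s : X ⟶ Y), ∃ t : Y ⟶ X, s ≫ t ≫ s = s)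
    {X Y X' Y' : C} (s : X ⟶ Y) (t : X' ⟶ Y')
    (hJ : Jset s = Jset t) (hle : Lset s ⊆ Lset t) :
    Lset s = Lset t := by
  clear hsplit
  -- s ∈ Lset t, so X = X' and s = t ≫ v
  have hs : (⟨X, Y, s⟩ : Mor C) ∈ Lset t := hle ⟨Y, 𝟙 Y, by simp; rfl⟩
  obtain ⟨Z, v, hv⟩ := hs
  obtain ⟨hXX', h2⟩ := Sigma.mk.inj_iff.mp hv
  subst hXX'
  obtain ⟨hYZ, h3⟩ := Sigma.mk.inj_iff.mp (eq_of_heq h2)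
  subst hYZ
  have hsv : s = t ≫ v := eq_of_heq h3
  clear hv h2 h3
  -- t ∈ Jset s, so t = u ≫ s ≫ w
  have ht : (⟨X, Y', t⟩ : Mor C) ∈ Jset s := by
    rw [hJ]
    exact ⟨X, Y', 𝟙 X, 𝟙 Y', by simp; rfl⟩
  obtain ⟨W, Z, u, w, hw⟩ := ht
  obtain ⟨hWX, h2⟩ := Sigma.mk.inj_iff.mp hw
  subst hWX
  obtain ⟨hZY, h3⟩ := Sigma.mk.inj_iff.mp (eq_of_heq h2)
  subst hZY
  have htuw : t = u ≫ s ≫ w := eq_of_heq h3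
  clear hw h2 h3
  -- base relation
  set c : End Y' := v ≫ w with hc
  set u' : End X := u with hu'
  have hbase : t = u' ≫ t ≫ c := by
    rw [hc]
    conv_lhs => rw [htuw, hsv]
    simp [hu']
  have hiter : ∀ n : ℕ, t = (u' ^ n : End X) ≫ t ≫ (c ^ n : End Y') := by
    intro n
    induction n with
    | zero => simp [End.one_def]
    | succ n ih =>
      have h1 : (u' ^ (n + 1) : End X) = (u' ^ n : End X) ≫ u' := by
        rw [pow_succ']; rfl
      have h2 : (c ^ (n + 1) : End Y') = c ≫ (c ^ n : End Y') := by
        rw [pow_succ]; rfl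
      rw [h1, h2]
      calc t = (u' ^ n : End X) ≫ t ≫ (c ^ n : End Y') := ih
        _ = (u' ^ n : End X) ≫ (u' ≫ t ≫ c) ≫ (c ^ n : End Y') := by rw [← hbase]
        _ = ((u' ^ n : End X) ≫ u') ≫ t ≫ c ≫ (c ^ n : End Y') := by
            simp only [Category.assoc]
  -- pick an idempotent power of c
  haveI : Finite (End Y') := inferInstanceAs (Finite (Y' ⟶ Y'))
  obtain ⟨N, hN1, hNidem⟩ := exists_pow_idem c
  have htc : t ≫ (c ^ N : End Y') = t := by
    calc t ≫ (c ^ N : End Y')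
        = ((u' ^ N : End X) ≫ t ≫ (c ^ N : End Y')) ≫ (c ^ N : End Y') := by
          rw [← hiter]
      _ = (u' ^ N : End X) ≫ t ≫ ((c ^ N : End Y') ≫ (c ^ N : End Y')) := by
          simp only [Category.assoc]
      _ = (u' ^ N : End X) ≫ t ≫ (c ^ (2 * N) : End Y') := by
          congr 2
          rw [two_mul, pow_add]
          rfl
      _ = (u' ^ N : End X) ≫ t ≫ (c ^ N : End Y') := by rw [hNidem]
      _ = t := (hiter N).symm
  -- hence t = s ≫ x
  obtain ⟨K, rfl⟩ : ∃ K, N = K + 1 := ⟨N - 1, by omega⟩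
  have hck : (c ^ (K + 1) : End Y') = v ≫ w ≫ (c ^ K : End Y') := by
    rw [pow_succ]
    show (c ^ K : End Y') * c = _
    rw [End.mul_def, hc]
    simp
  have hts : t = s ≫ (w ≫ (c ^ K : End Y')) := by
    calc t = t ≫ (c ^ (K + 1) : End Y') := htc.symm
      _ = (t ≫ v) ≫ w ≫ (c ^ K : End Y') := by rw [hck]; simp
      _ = s ≫ (w ≫ (c ^ K : End Y')) := by rw [← hsv]
  -- conclude
  apply Set.Subset.antisymm hle
  rintro m ⟨Z, z, rfl⟩
  exact ⟨Z, (w ≫ (c ^ K : End Y')) ≫ z, by rw [hts]; simp; rfl⟩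
end

section
/- Let C be a finite split category and let s, t be morphisms of C lying in the same J-class I (i.e., I = J(s) = J(t)). Then the sets (Mor(C)∘s) ∩ I and (Mor(C)∘t) ∩ I are either equal or disjoint. -/
open CategoryTheory

/-- `Mor(C)∘m∘Mor(C)` for a bundled morphism `m`. -/
def JsetM {C : Type*} [Category C] (m : Mor C) : Set (Mor C) := Jset m.2.2

/-- The `J`-class of a morphism `s : X ⟶ Y`: the set of all morphisms `x` with
`Mor(C)∘x∘Mor(C) = Mor(C)∘s∘Mor(C)`. -/
def JClass {C : Type*} [Category C] {X Y : C} (s : X ⟶ Y) : Set (Mor C) :=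
  { x | JsetM x = Jset s }

/-- Iterated composition power of an endomorphism. -/
def powm {C : Type*} [Category C] {X : C} (u : X ⟶ X) : ℕ → (X ⟶ X)
  | 0 => 𝟙 X
  | n+1 => u ≫ powm u n

lemma powm_add {C : Type*} [Category C] {X : C} (u : X ⟶ X) (m n : ℕ) :
    powm u (m + n) = powm u m ≫ powm u n := by
  induction m with
  | zero => simp [powm]
  | succ k ih => rw [Nat.succ_add]; simp [powm, ih]

lemma powm_idem {C : Type*} [Category C] {X : C} [Finite (X ⟶ X)] (u : X ⟶ X) :
    ∃ N ≥ 1, powm u N ≫ powm u N = powm u N := by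
  obtain ⟨i, j, hne, hij⟩ := Finite.exists_ne_map_eq_of_infinite (powm u)
  wlog hlt : i < j generalizing i j
  · exact this j i hne.symm hij.symm (by omega)
  set d := j - i with hd
  have hd1 : 1 ≤ d := by omega
  have hstep : ∀ n, i ≤ n → powm u (n + d) = powm u n := by
    intro n hn
    have h1 : powm u n = powm u i ≫ powm u (n - i) := by
      rw [← powm_add]; congr 1; omega
    have h2 : powm u (n + d) = powm u (i + d) ≫ powm u (n - i) := by
      rw [← powm_add]; congr 1; omega
    have h3 : (i + d) = j := by omega
    rw [h2, h3, ← hij, ← h1]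
  have hiter : ∀ k n, i ≤ n → powm u (n + k * d) = powm u n := by
    intro k
    induction k with
    | zero => intro n hn; simp
    | succ m ih =>
        intro n hn
        have : n + (m + 1) * d = (n + m * d) + d := by ring
        rw [this, hstep _ (by omega), ih n hn]
  refine ⟨(i + 1) * d, by nlinarith, ?_⟩
  rw [← powm_add]
  have : (i + 1) * d + (i + 1) * d = (i + 1) * d + (i + 1) * d := rfl
  exact hiter (i + 1) ((i + 1) * d) (by nlinarith)

/-- Key stability lemma: if `s ≫ v` is `J`-equivalent to `s`, then `s` factors
back through `s ≫ v`. -/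
lemma key {C : Type*} [Category C] [∀ X Y : C, Finite (X ⟶ Y)]
    {X Y Z : C} (s : X ⟶ Y) (v : Y ⟶ Z) (h : Jset (s ≫ v) = Jset s) :
    ∃ w : Z ⟶ Y, s = s ≫ v ≫ w := by
  have hs : (⟨X, Y, s⟩ : Mor C) ∈ Jset s := ⟨X, Y, 𝟙 X, 𝟙 Y, by simp; rfl⟩
  rw [← h] at hs
  obtain ⟨W, Z', u, w, hw⟩ := hs
  injection hw with h1 h2
  subst h1
  have h2' := eq_of_heq h2
  injection h2' with h3 h4
  subst h3
  have hs : s = u ≫ (s ≫ v) ≫ w := eq_of_heq h4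
  set c : Y ⟶ Y := v ≫ w with hc
  have hsc : s = u ≫ s ≫ c := by rw [hc]; simpa using hs
  have hiter : ∀ n, s = powm u n ≫ s ≫ powm c n := by
    intro n
    induction n with
    | zero => simp [powm]
    | succ m ih =>
        calc s = u ≫ s ≫ c := hsc
        _ = u ≫ (powm u m ≫ s ≫ powm c m) ≫ c := by rw [← ih]
        _ = powm u (m+1) ≫ s ≫ powm c (m+1) := by
            have hcomm : powm c m ≫ c = c ≫ powm c m := by
              have := powm_add c m 1
              have h1 : powm c 1 = c := by simp [powm]
              have := powm_add c 1 m
              calc powm c m ≫ c = powm c m ≫ powm c 1 := by rw [h1]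
              _ = powm c (m + 1) := (powm_add c m 1).symm
              _ = powm c (1 + m) := by rw [Nat.add_comm]
              _ = powm c 1 ≫ powm c m := powm_add c 1 m
              _ = c ≫ powm c m := by rw [h1]
            simp only [powm, Category.assoc]
            rw [hcomm]
  obtain ⟨N, hN1, hNidem⟩ := powm_idem u
  have hsN := hiter N
  have he : powm u N ≫ s = s := by
    calc powm u N ≫ s = powm u N ≫ powm u N ≫ s ≫ powm c N := by rw [← hsN]
    _ = (powm u N ≫ powm u N) ≫ s ≫ powm c N := by simp
    _ = powm u N ≫ s ≫ powm c N := by rw [hNidem]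
    _ = s := hsN.symm
  have hsc' : s = s ≫ powm c N := by
    calc s = powm u N ≫ s ≫ powm c N := hsN
    _ = (powm u N ≫ s) ≫ powm c N := by simp
    _ = s ≫ powm c N := by rw [he]
  obtain ⟨M, rfl⟩ : ∃ M, N = M + 1 := ⟨N - 1, by omega⟩
  refine ⟨w ≫ powm c M, ?_⟩
  calc s = s ≫ powm c (M + 1) := hsc'
  _ = s ≫ c ≫ powm c M := by rfl
  _ = s ≫ v ≫ w ≫ powm c M := by rw [hc]; simp

lemma lset_eq {C : Type*} [Category C] {X Y Z : C} (s : X ⟶ Y) (v : Y ⟶ Z)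
    (h : ∃ w : Z ⟶ Y, s = s ≫ v ≫ w) : Lset (s ≫ v) = Lset s := by
  obtain ⟨w, hw⟩ := h
  ext m
  constructor
  · rintro ⟨Z', x, rfl⟩
    exact ⟨Z', v ≫ x, by simp; rfl⟩
  · rintro ⟨Z', x, rfl⟩
    refine ⟨Z', w ≫ x, ?_⟩
    simp only [Category.assoc]
    congr 1
    conv_lhs => rw [hw]
    simp

/-- In a finite split category, if `s` and `t` lie in the same
`J`-class `I = J(s) = J(t)`, then `(Mor(C)∘s) ∩ I` and `(Mor(C)∘t) ∩ I` are either
equal or disjoint. -/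
theorem statement8 {C : Type*} [Category C] [Finite C]
    [∀ X Y : C, Finite (X ⟶ Y)]
    (hsplit : ∀ {X Y : C} (s : X ⟶ Y), ∃ t : Y ⟶ X, s ≫ t ≫ s = s)
    {X Y X' Y' : C} (s : X ⟶ Y) (t : X' ⟶ Y')
    {I : Set (Mor C)} (hIs : I = JClass s) (hIt : I = JClass t) :
    Lset s ∩ I = Lset t ∩ I ∨ Disjoint (Lset s ∩ I) (Lset t ∩ I) := by
  by_cases hdisj : Disjoint (Lset s ∩ I) (Lset t ∩ I)
  · exact Or.inr hdisj
  left
  obtain ⟨m, ⟨hms, hmI⟩, ⟨hmt, _⟩⟩ := Set.not_disjoint_iff.mp hdisj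
  obtain ⟨Z, v, rfl⟩ := hms
  have hJs : Jset (s ≫ v) = Jset s := by
    have := hIs ▸ hmI
    exact this
  obtain ⟨Z2, v', hmt'⟩ := hmt
  injection hmt' with h1 h2
  subst h1
  have h2' := eq_of_heq h2
  injection h2' with h3 h4
  subst h3
  have heq : s ≫ v = t ≫ v' := eq_of_heq h4
  have hJt : Jset (t ≫ v') = Jset t := by
    have h := hIt ▸ hmI
    show JsetM ⟨X, Z, t ≫ v'⟩ = Jset t
    rw [← heq]
    exact h
  have hLs : Lset (s ≫ v) = Lset s := lset_eq s v (key s v hJs)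
  have hLt : Lset (t ≫ v') = Lset t := lset_eq t v' (key t v' hJt)
  have : Lset s = Lset t := by rw [← hLs, ← hLt, heq]
  rw [this]
end

section
/- Let C be a finite split category and let I be a J-class of C. Then there exists a set ε of idempotent endomorphisms of C, each belonging to I, such that the sets (Mor(C)∘e) ∩ I for e ∈ ε are pairwise disjoint and their union equals I. -/
open CategoryTheory

/-- The `J`-class of a bundled morphism `m`. -/
def JClassM {C : Type*} [Category C] (m : Mor C) : Set (Mor C) :=
  { x | JsetM x = JsetM m }

section Aux

variable {C : Type*} [Category C]

/-- Iterated composition of an endomorphism. -/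
def cpow {Y : C} (b : Y ⟶ Y) : ℕ → (Y ⟶ Y)
  | 0 => 𝟙 Y
  | n + 1 => cpow b n ≫ b

lemma cpow_add {Y : C} (b : Y ⟶ Y) (p q : ℕ) :
    cpow b (p + q) = cpow b p ≫ cpow b q := by
  induction q with
  | zero => simp [cpow]
  | succ q ih => simp [cpow, ← Nat.add_assoc, ih]

lemma cpow_comm {Y : C} (b : Y ⟶ Y) (n : ℕ) :
    cpow b n ≫ b = b ≫ cpow b n := by
  induction n with
  | zero => simp [cpow]
  | succ n ih => simp [cpow, ih]

lemma exists_idem_aux {Y : C} (b : Y ⟶ Y) {m n : ℕ} (hmn : m < n)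
    (h : cpow b m = cpow b n) :
    ∃ N, 0 < N ∧ cpow b N ≫ cpow b N = cpow b N := by
  set d := n - m with hd
  have hd1 : 1 ≤ d := by omega
  have hnd : n = m + d := by omega
  have step : ∀ j, m ≤ j → cpow b (j + d) = cpow b j := by
    intro j hj
    obtain ⟨k, rfl⟩ := Nat.exists_eq_add_of_le hj
    have e1 : m + k + d = (m + d) + k := by omega
    rw [e1, cpow_add, ← hnd, ← h, ← cpow_add]
  have iter : ∀ t j, m ≤ j → cpow b (j + t * d) = cpow b j := by
    intro t
    induction t with
    | zero => simp
    | succ t ih =>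
      intro j hj
      have e1 : j + (t + 1) * d = (j + d) + t * d := by ring
      rw [e1, ih (j + d) (by omega), step j hj]
  refine ⟨(m + 1) * d, Nat.mul_pos (by omega) hd1, ?_⟩
  have hge : m ≤ (m + 1) * d := by nlinarith
  rw [← cpow_add, iter (m + 1) ((m + 1) * d) hge]

lemma cpow_exists_idem {Y : C} [Finite (Y ⟶ Y)] (b : Y ⟶ Y) :
    ∃ N, 0 < N ∧ cpow b N ≫ cpow b N = cpow b N := by
  obtain ⟨i, j, hne, hij⟩ := Finite.exists_ne_map_eq_of_infinite (cpow b)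
  rcases hne.lt_or_gt with h | h
  · exact exists_idem_aux b h hij
  · exact exists_idem_aux b h hij.symm

lemma self_mem_lset {X Y : C} (s : X ⟶ Y) : (⟨X, Y, s⟩ : Mor C) ∈ Lset s :=
  ⟨Y, 𝟙 Y, by simp; rfl⟩

lemma self_mem_jset {X Y : C} (s : X ⟶ Y) : (⟨X, Y, s⟩ : Mor C) ∈ Jset s :=
  ⟨X, Y, 𝟙 X, 𝟙 Y, by simp; rfl⟩

lemma lset_comp_subset {X Y Z : C} (s : X ⟶ Y) (v : Y ⟶ Z) :
    Lset (s ≫ v) ⊆ Lset s := by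
  rintro _ ⟨W, w, rfl⟩
  exact ⟨W, v ≫ w, by simp; rfl⟩

lemma jset_eq_of_comp {X Y Z : C} (s : X ⟶ Y) (t : X ⟶ Z) (a : Y ⟶ Z) (b : Z ⟶ Y)
    (ha : t = s ≫ a) (hb : s = t ≫ b) : Jset s = Jset t := by
  apply Set.Subset.antisymm
  · rintro _ ⟨W, Z', u, w, rfl⟩
    exact ⟨W, Z', u, b ≫ w, by rw [hb]; simp; rfl⟩
  · rintro _ ⟨W, Z', u, w, rfl⟩
    exact ⟨W, Z', u, a ≫ w, by rw [ha]; simp; rfl⟩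

/-- Stability: if `s` is two-sided-divisible by `s ≫ v`, then `s` is
left-divisible by `s ≫ v`, hence `Lset s = Lset (s ≫ v)`. -/
lemma stab [∀ X Y : C, Finite (X ⟶ Y)] {X Y Z : C} (s : X ⟶ Y) (v : Y ⟶ Z)
    (h : (⟨X, Y, s⟩ : Mor C) ∈ Jset (s ≫ v)) : Lset s = Lset (s ≫ v) := by
  obtain ⟨W, Z', u, w, heq0⟩ := h
  have heq : (⟨X, ⟨Y, s⟩⟩ : Σ A : C, Σ B : C, A ⟶ B) = ⟨W, ⟨Z', u ≫ (s ≫ v) ≫ w⟩⟩ := heq0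
  rw [Sigma.mk.inj_iff] at heq
  obtain ⟨rfl, heq⟩ := heq
  have heq := eq_of_heq heq
  rw [Sigma.mk.inj_iff] at heq
  obtain ⟨rfl, heq⟩ := heq
  have key : s = u ≫ s ≫ (v ≫ w) := by
    conv_lhs => rw [eq_of_heq heq]
    simp
  set b : Y ⟶ Y := v ≫ w with hb
  have key' : ∀ {T : C} (q : Y ⟶ T), u ≫ s ≫ b ≫ q = s ≫ q := by
    intro T q
    conv_rhs => rw [key]
    simp
  have claim : ∀ n, cpow u n ≫ s ≫ cpow b n = s := by
    intro n
    induction n with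
    | zero => simp [cpow]
    | succ n ih =>
      have e1 : cpow b (n + 1) = b ≫ cpow b n := by
        rw [show cpow b (n + 1) = cpow b n ≫ b from rfl, cpow_comm]
      calc cpow u (n + 1) ≫ s ≫ cpow b (n + 1)
          = cpow u n ≫ (u ≫ s ≫ b ≫ cpow b n) := by
            rw [e1, show cpow u (n + 1) = cpow u n ≫ u from rfl]
            simp only [Category.assoc]
        _ = cpow u n ≫ s ≫ cpow b n := by rw [key']
        _ = s := ih
  obtain ⟨N, hN, hidem⟩ := cpow_exists_idem b
  have hfix : s ≫ cpow b N = s := by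
    conv_lhs => rw [← claim N]
    simp only [Category.assoc]
    rw [hidem]
    exact claim N
  obtain ⟨k, rfl⟩ : ∃ k, N = k + 1 := ⟨N - 1, by omega⟩
  have e1 : cpow b (k + 1) = b ≫ cpow b k := by
    rw [show cpow b (k + 1) = cpow b k ≫ b from rfl, cpow_comm]
  have hdiv : ∀ {T : C} (q : Y ⟶ T), (s ≫ v) ≫ (w ≫ cpow b k ≫ q) = s ≫ q := by
    intro T q
    conv_rhs => rw [← hfix, e1]
    simp [hb]
  apply Set.Subset.antisymm
  · rintro _ ⟨T, q, rfl⟩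
    refine ⟨T, w ≫ cpow b k ≫ q, ?_⟩
    rw [hdiv]
  · exact lset_comp_subset s v

lemma jset_eq_of_lset_eq (x y : Mor C) (h : Lset x.2.2 = Lset y.2.2) :
    JsetM x = JsetM y := by
  obtain ⟨X, Y, s⟩ := x
  obtain ⟨X', Y', t⟩ := y
  have h1 : (⟨X, Y, s⟩ : Mor C) ∈ Lset t := h ▸ self_mem_lset s
  have h2 : (⟨X', Y', t⟩ : Mor C) ∈ Lset s := h.symm ▸ self_mem_lset t
  obtain ⟨Z, v, hv0⟩ := h1
  obtain ⟨Z', w, hw0⟩ := h2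
  have hv : (⟨X, ⟨Y, s⟩⟩ : Σ A : C, Σ B : C, A ⟶ B) = ⟨X', ⟨Z, t ≫ v⟩⟩ := hv0
  have hw : (⟨X', ⟨Y', t⟩⟩ : Σ A : C, Σ B : C, A ⟶ B) = ⟨X, ⟨Z', s ≫ w⟩⟩ := hw0
  rw [Sigma.mk.inj_iff] at hv
  obtain ⟨h3, hv⟩ := hv
  subst h3
  have hv := eq_of_heq hv
  rw [Sigma.mk.inj_iff] at hv
  obtain ⟨rfl, hv⟩ := hv
  have hv := eq_of_heq hv
  rw [Sigma.mk.inj_iff] at hw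
  obtain ⟨-, hw⟩ := hw
  have hw := eq_of_heq hw
  rw [Sigma.mk.inj_iff] at hw
  obtain ⟨rfl, hw⟩ := hw
  have hw := eq_of_heq hw
  show Jset s = Jset t
  exact jset_eq_of_comp s t w v hw hv

open Classical in
/-- A canonical representative of the `L`-class of `x`. -/
noncomputable def gfun (x : Mor C) : Mor C :=
  if h : ∃ y : Mor C, Lset y.2.2 = Lset x.2.2 then h.choose else x

lemma gfun_lset (x : Mor C) : Lset (gfun x).2.2 = Lset x.2.2 := by
  have h : ∃ y : Mor C, Lset y.2.2 = Lset x.2.2 := ⟨x, rfl⟩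
  rw [gfun, dif_pos h]
  exact h.choose_spec

lemma gfun_congr {x x' : Mor C} (h : Lset x.2.2 = Lset x'.2.2) : gfun x = gfun x' := by
  have hq : ∃ y : Mor C, Lset y.2.2 = Lset x'.2.2 := ⟨x', rfl⟩
  rw [gfun, gfun, h, dif_pos hq, dif_pos hq]

/-- The canonical idempotent attached to a morphism, via splitness. -/
noncomputable def Efun (hsplit : ∀ {X Y : C} (s : X ⟶ Y), ∃ t : Y ⟶ X, s ≫ t ≫ s = s)
    (y : Mor C) : Σ X : C, X ⟶ X :=
  ⟨y.1, y.2.2 ≫ (hsplit y.2.2).choose⟩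

lemma Efun_spec' (hsplit : ∀ {X Y : C} (s : X ⟶ Y), ∃ t : Y ⟶ X, s ≫ t ≫ s = s)
    (y : Mor C) {T : C} (q : y.2.1 ⟶ T) :
    y.2.2 ≫ (hsplit y.2.2).choose ≫ y.2.2 ≫ q = y.2.2 ≫ q := by
  conv_rhs => rw [← (hsplit y.2.2).choose_spec]
  simp

lemma Efun_idem (hsplit : ∀ {X Y : C} (s : X ⟶ Y), ∃ t : Y ⟶ X, s ≫ t ≫ s = s)
    (y : Mor C) : (Efun hsplit y).2 ≫ (Efun hsplit y).2 = (Efun hsplit y).2 := by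
  show (y.2.2 ≫ (hsplit y.2.2).choose) ≫ (y.2.2 ≫ (hsplit y.2.2).choose)
      = y.2.2 ≫ (hsplit y.2.2).choose
  simp only [Category.assoc]
  exact Efun_spec' hsplit y (hsplit y.2.2).choose

lemma Efun_lset (hsplit : ∀ {X Y : C} (s : X ⟶ Y), ∃ t : Y ⟶ X, s ≫ t ≫ s = s)
    (y : Mor C) : Lset (Efun hsplit y).2 = Lset y.2.2 := by
  apply Set.Subset.antisymm
  · exact lset_comp_subset _ _
  · rintro _ ⟨T, q, rfl⟩
    refine ⟨T, y.2.2 ≫ q, ?_⟩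
    have h2 : (Efun hsplit y).2 ≫ (y.2.2 ≫ q) = y.2.2 ≫ q := by
      show (y.2.2 ≫ (hsplit y.2.2).choose) ≫ (y.2.2 ≫ q) = y.2.2 ≫ q
      simp only [Category.assoc]
      exact Efun_spec' hsplit y q
    rw [h2]
    rfl

lemma Efun_jset (hsplit : ∀ {X Y : C} (s : X ⟶ Y), ∃ t : Y ⟶ X, s ≫ t ≫ s = s)
    (y : Mor C) : Jset (Efun hsplit y).2 = Jset y.2.2 := by
  have hb : y.2.2 = (y.2.2 ≫ (hsplit y.2.2).choose) ≫ y.2.2 := by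
    conv_lhs => rw [← (hsplit y.2.2).choose_spec]
    simp
  exact (jset_eq_of_comp y.2.2 (y.2.2 ≫ (hsplit y.2.2).choose)
    (hsplit y.2.2).choose y.2.2 rfl hb).symm

end Aux

/-- In a finite split category, for every `J`-class `I` there is a set
`ε` of idempotent endomorphisms, all lying in `I`, such that the sets `(Mor(C)∘e) ∩ I`
for `e ∈ ε` are pairwise disjoint with union `I`. -/
theorem statement9 {C : Type*} [Category C] [Finite C]
    [∀ X Y : C, Finite (X ⟶ Y)]
    (hsplit : ∀ {X Y : C} (s : X ⟶ Y), ∃ t : Y ⟶ X, s ≫ t ≫ s = s)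
    (I : Set (Mor C)) (m : Mor C) (hI : I = JClassM m) :
    ∃ ε : Set (Σ X : C, X ⟶ X),
      (∀ e ∈ ε, e.2 ≫ e.2 = e.2 ∧ (⟨e.1, e.1, e.2⟩ : Mor C) ∈ I) ∧
      (ε.PairwiseDisjoint fun e => Lset e.2 ∩ I) ∧
      (⋃ e ∈ ε, Lset e.2 ∩ I) = I := by
  subst hI
  -- key: within the J-class, left-divisibility is stable
  have key : ∀ x ∈ JClassM m, ∀ z ∈ JClassM m, z ∈ Lset x.2.2 →
      Lset z.2.2 = Lset x.2.2 := by
    rintro ⟨X, Y, s⟩ hx z hz hzl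
    obtain ⟨Z, v, rfl⟩ := hzl
    have hJs : Jset s = JsetM m := hx
    have hJsv : Jset (s ≫ v) = JsetM m := hz
    have : (⟨X, Y, s⟩ : Mor C) ∈ Jset (s ≫ v) := by
      rw [hJsv, ← hJs]; exact self_mem_jset s
    exact (stab s v this).symm
  refine ⟨(fun x => Efun hsplit (gfun x)) '' JClassM m, ?_, ?_, ?_⟩
  · rintro _ ⟨x, hx, rfl⟩
    refine ⟨Efun_idem hsplit (gfun x), ?_⟩
    show JsetM _ = JsetM m
    have h1 : JsetM (⟨(Efun hsplit (gfun x)).1, (Efun hsplit (gfun x)).1,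
        (Efun hsplit (gfun x)).2⟩ : Mor C) = Jset (Efun hsplit (gfun x)).2 := rfl
    rw [h1, Efun_jset]
    have h2 : JsetM (gfun x) = JsetM x := jset_eq_of_lset_eq _ _ (gfun_lset x)
    show JsetM (gfun x) = JsetM m
    rw [h2]; exact hx
  · rintro _ ⟨x, hx, rfl⟩ _ ⟨x', hx', rfl⟩ hne
    rw [Function.onFun]
    rw [Set.disjoint_left]
    rintro z ⟨hz1, hz2⟩ ⟨hz1', _⟩
    rw [Efun_lset, gfun_lset] at hz1 hz1'
    have e1 : Lset z.2.2 = Lset x.2.2 := key x hx z hz2 hz1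
    have e2 : Lset z.2.2 = Lset x'.2.2 := key x' hx' z hz2 hz1'
    exact hne (congrArg (Efun hsplit) (gfun_congr (e1.symm.trans e2)))
  · apply Set.Subset.antisymm
    · simp only [Set.iUnion_subset_iff]
      intro e _
      exact Set.inter_subset_right
    · intro x hx
      rw [Set.mem_iUnion]
      refine ⟨Efun hsplit (gfun x), ?_⟩
      rw [Set.mem_iUnion]
      refine ⟨⟨x, hx, rfl⟩, ?_, hx⟩
      rw [Efun_lset, gfun_lset]
      obtain ⟨X, Y, s⟩ := x
      exact self_mem_lset s
end

section
/- Let C be a finite split category, let e ∈ End_C(X) be an idempotent, and set J_e := { a ∈ e∘End_C(X)∘e : J(a) ≠ J(e) }. Then { x ∈ Mor(C)∘e : J(x) ≠ J(e) } = Mor(C)∘J_e, where Mor(C)∘J_e = { v∘a | a ∈ J_e, v a morphism with domain X }. -/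
open CategoryTheory

/-- For an idempotent `e ∈ End(X)`, the set `J_e := { a ∈ e∘End(X)∘e : J(a) ≠ J(e) }`
(with `e∘a∘e` written `e ≫ a ≫ e` in Lean). -/
def Jlower {C : Type*} [Category C] {X : C} (e : X ⟶ X) : Set (X ⟶ X) :=
  { a | (∃ b : X ⟶ X, a = e ≫ b ≫ e) ∧ Jset a ≠ Jset e }

lemma Jset_comp_subset {C : Type*} [Category C] {W X Y Z : C}
    (u : W ⟶ X) (s : X ⟶ Y) (v : Y ⟶ Z) : Jset (u ≫ s ≫ v) ⊆ Jset s := by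
  rintro m ⟨A, B, p, q, rfl⟩
  exact ⟨A, B, p ≫ u, v ≫ q, by simp; rfl⟩

/-- In a finite split category, for an idempotent `e ∈ End(X)`,
`{ x ∈ Mor(C)∘e : J(x) ≠ J(e) } = Mor(C)∘J_e`. -/
theorem statement10 {C : Type*} [Category C] [Finite C]
    [∀ X Y : C, Finite (X ⟶ Y)]
    (hsplit : ∀ {X Y : C} (s : X ⟶ Y), ∃ t : Y ⟶ X, s ≫ t ≫ s = s)
    {X : C} (e : X ⟶ X) (he : e ≫ e = e) :
    { m : Mor C | m ∈ Lset e ∧ JsetM m ≠ Jset e } =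
      { m : Mor C | ∃ a ∈ Jlower e, ∃ (Z : C) (v : X ⟶ Z), m = ⟨X, Z, a ≫ v⟩ } := by
  ext m
  constructor
  · rintro ⟨⟨Z, v, rfl⟩, hne⟩
    obtain ⟨t, ht⟩ := hsplit (e ≫ v)
    refine ⟨e ≫ (v ≫ t) ≫ e, ⟨⟨v ≫ t, rfl⟩, ?_⟩, Z, v, ?_⟩
    · intro h
      apply hne
      have h1 : Jset (e ≫ v) ⊆ Jset (e ≫ (v ≫ t) ≫ e) := by
        have : e ≫ v = 𝟙 X ≫ (e ≫ (v ≫ t) ≫ e) ≫ v := by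
          simpa using ht.symm
        rw [this]; exact Jset_comp_subset _ _ _
      have h2 : Jset (e ≫ (v ≫ t) ≫ e) ⊆ Jset (e ≫ v) := by
        have : e ≫ (v ≫ t) ≫ e = 𝟙 X ≫ (e ≫ v) ≫ (t ≫ e) := by simp
        rw [this]; exact Jset_comp_subset _ _ _
      have : JsetM (⟨X, Z, e ≫ v⟩ : Mor C) = Jset (e ≫ (v ≫ t) ≫ e) :=
        h1.antisymm h2
      rw [this, h]
    · exact congrArg (fun f => (⟨X, Z, f⟩ : Mor C)) (by simpa using ht.symm)
  · rintro ⟨a, ⟨⟨b, rfl⟩, hne⟩, Z, v, rfl⟩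
    refine ⟨⟨Z, b ≫ e ≫ v, by simp; rfl⟩, ?_⟩
    intro h
    apply hne
    have h1 : Jset (e ≫ b ≫ e) ⊆ Jset e := by
      have : e ≫ b ≫ e = 𝟙 X ≫ e ≫ (b ≫ e) := by simp
      rw [this]; exact Jset_comp_subset _ _ _
    have h2 : Jset e ⊆ Jset (e ≫ b ≫ e) := by
      rw [← h]
      have : ((e ≫ b ≫ e) ≫ v) = 𝟙 X ≫ (e ≫ b ≫ e) ≫ v := by simp
      exact this ▸ Jset_comp_subset (𝟙 X) (e ≫ b ≫ e) v
    exact h1.antisymm h2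
end

section
/- Let C be a finite split category, let e ∈ End_C(X) be an idempotent, and let a ∈ e∘End_C(X)∘e. Then a is invertible in the monoid e∘End_C(X)∘e (whose multiplication is composition and whose identity element is e), i.e., there exists b ∈ e∘End_C(X)∘e with a∘b = e = b∘a, if and only if J(a) = J(e). -/
open CategoryTheory

/-- Auxiliary finite-monoid lemma: if `u ≫ a ≫ v = e` where all of `u, v, a` lie in the
corner monoid `e ≫ End(X) ≫ e` of the idempotent `e`, then `v ≫ u` is a two-sided
inverse of `a` there.  This is the standard pigeonhole argument: a surjective self-map
of a finite set is injective. -/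
lemma key_s11 {C : Type*} [Category C] {X : C} [Finite (X ⟶ X)]
    (e : X ⟶ X) (he : e ≫ e = e) (a u v : X ⟶ X)
    (hea : e ≫ a = a) (hae : a ≫ e = a)
    (hu1 : e ≫ u = u) (hu2 : u ≫ e = u)
    (hv1 : e ≫ v = v) (hv2 : v ≫ e = v)
    (h : u ≫ a ≫ v = e) :
    (v ≫ u) ≫ a = e ∧ a ≫ (v ≫ u) = e := by
  have hea' := reassoc_of% hea
  have hu1' := reassoc_of% hu1
  have h' := reassoc_of% h
  let S := {m : X ⟶ X // e ≫ m = m ∧ m ≫ e = m}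
  have hfin : Finite S := Subtype.finite
  -- left inverse
  let f : S → S := fun m =>
    ⟨u ≫ a ≫ m.1, by simp only [← Category.assoc, hu1],
      by simp only [Category.assoc, m.2.2]⟩
  have hfsurj : Function.Surjective f := by
    intro m
    refine ⟨⟨v ≫ m.1, by simp only [← Category.assoc, hv1],
      by simp only [Category.assoc, m.2.2]⟩, ?_⟩
    apply Subtype.ext
    show u ≫ a ≫ v ≫ m.1 = m.1
    rw [h', m.2.1]
  have hfinj : Function.Injective f := Finite.injective_iff_surjective.mpr hfsurj
  have hvp : v ≫ u ≫ a = e := by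
    have h1 : f ⟨v ≫ u ≫ a, by simp only [← Category.assoc, hv1],
        by simp only [Category.assoc, hae]⟩ = f ⟨e, he, he⟩ := by
      apply Subtype.ext
      show u ≫ a ≫ v ≫ u ≫ a = u ≫ a ≫ e
      rw [h', hu1']
      conv_rhs => rw [hae]
    exact congrArg Subtype.val (hfinj h1)
  -- right inverse
  let g : S → S := fun m =>
    ⟨m.1 ≫ a ≫ v, by simp only [← Category.assoc, m.2.1],
      by simp only [Category.assoc, hv2]⟩
  have hgsurj : Function.Surjective g := by
    intro m
    refine ⟨⟨m.1 ≫ u, by simp only [← Category.assoc, m.2.1],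
      by simp only [Category.assoc, hu2]⟩, ?_⟩
    apply Subtype.ext
    show (m.1 ≫ u) ≫ a ≫ v = m.1
    rw [Category.assoc, h, m.2.2]
  have hginj : Function.Injective g := Finite.injective_iff_surjective.mpr hgsurj
  have hqu : (a ≫ v) ≫ u = e := by
    have h1 : g ⟨(a ≫ v) ≫ u, by simp only [← Category.assoc, hea],
        by simp only [Category.assoc, hu2]⟩ = g ⟨e, he, he⟩ := by
      apply Subtype.ext
      show ((a ≫ v) ≫ u) ≫ a ≫ v = e ≫ a ≫ v
      rw [Category.assoc, h, Category.assoc, hv2, hea']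
    exact congrArg Subtype.val (hginj h1)
  constructor
  · rw [Category.assoc]; exact hvp
  · rw [← Category.assoc]; exact hqu

/-- In a finite split category, let `e ∈ End(X)` be an idempotent and
let `a ∈ e∘End(X)∘e`.  Then `a` is invertible in the monoid `e∘End(X)∘e` (with identity
element `e`), i.e. there exists `b ∈ e∘End(X)∘e` with `a∘b = e = b∘a`, if and only if
`J(a) = J(e)`. -/
theorem statement11 {C : Type*} [Category C] [Finite C]
    [∀ X Y : C, Finite (X ⟶ Y)]
    (hsplit : ∀ {X Y : C} (s : X ⟶ Y), ∃ t : Y ⟶ X, s ≫ t ≫ s = s)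
    {X : C} (e : X ⟶ X) (he : e ≫ e = e)
    (a : X ⟶ X) (ha : ∃ c : X ⟶ X, a = e ≫ c ≫ e) :
    (∃ b : X ⟶ X, (∃ c : X ⟶ X, b = e ≫ c ≫ e) ∧ b ≫ a = e ∧ a ≫ b = e) ↔
      Jset a = Jset e := by
  obtain ⟨c, hc⟩ := ha
  have hea : e ≫ a = a := by rw [hc]; simp only [← Category.assoc, he]
  have hae : a ≫ e = a := by rw [hc]; simp only [Category.assoc, he]
  constructor
  · -- if `a` is invertible in the corner monoid, then `J(a) = J(e)`
    rintro ⟨b, ⟨c', hb⟩, hba, hab⟩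
    apply Set.Subset.antisymm
    · rintro m ⟨W, Z, p, q, hm⟩
      refine ⟨W, Z, p, c ≫ e ≫ q, ?_⟩
      rw [hm, hc]
      simp only [Category.assoc]; rfl
    · rintro m ⟨W, Z, p, q, hm⟩
      refine ⟨W, Z, p ≫ b, q, ?_⟩
      rw [hm, ← hba]
      simp only [Category.assoc]; rfl
  · -- if `J(a) = J(e)`, then `e = p ≫ a ≫ q` for some `p, q`, and the pigeonhole
    -- argument in the finite corner monoid produces a two-sided inverse of `a`
    intro hJ
    have hmem : (⟨X, X, e⟩ : Mor C) ∈ Jset a := by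
      rw [hJ]
      exact ⟨X, X, 𝟙 X, 𝟙 X, by simp; rfl⟩
    obtain ⟨W, Z, p, q, hm⟩ := hmem
    -- extract the equality of morphisms from the sigma equality
    injection hm with h1 h2
    subst h1
    injection h2 with h3 h4
    subst h3
    have hpq : p ≫ a ≫ q = e := (eq_of_heq h4).symm
    have hpq' := reassoc_of% hpq
    have he' := reassoc_of% he
    have hea' := reassoc_of% hea
    have hae' := reassoc_of% hae
    set u : X ⟶ X := e ≫ p ≫ e with hu
    set v : X ⟶ X := e ≫ q ≫ e with hv
    have hu1 : e ≫ u = u := by rw [hu]; simp only [← Category.assoc, he]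
    have hu2 : u ≫ e = u := by rw [hu]; simp only [Category.assoc, he]
    have hv1 : e ≫ v = v := by rw [hv]; simp only [← Category.assoc, he]
    have hv2 : v ≫ e = v := by rw [hv]; simp only [Category.assoc, he]
    have huav : u ≫ a ≫ v = e := by
      rw [hu, hv]
      simp only [Category.assoc, hea', hae', hpq', he', he]
    obtain ⟨hba, hab⟩ := key_s11 e he a u v hea hae hu1 hu2 hv1 hv2 huav
    refine ⟨v ≫ u, ⟨v ≫ u, ?_⟩, hba, hab⟩
    calc v ≫ u = (e ≫ v) ≫ (u ≫ e) := by rw [hv1, hu2]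
    _ = e ≫ (v ≫ u) ≫ e := by simp only [Category.assoc]
end

section
/- Let M be a finite regular monoid and let k be a field such that the order of Γ_e is invertible in k for every idempotent e ∈ M. Let A := MonoidAlgebra k M. Then the Jacobson radical of A equals { u ∈ A : for every idempotent e ∈ M, e·A·u·A·e ⊆ kJ_e }, where kJ_e denotes the k-linear span in A of the set J_e := eMe ∖ Γ_e, and e·A·u·A·e := { e·a·u·b·e : a, b ∈ A }. -/
/-- The submonoid `eMe = { e·a·e : a ∈ M }` of a monoid `M`, for an idempotent `e`. -/
def eMe {M : Type*} [Monoid M] (e : M) : Set M := { a : M | ∃ c : M, a = e * c * e }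

/-- The group `Γ_e` of invertible elements of the monoid `eMe` (identity element `e`). -/
def unitSet {M : Type*} [Monoid M] (e : M) : Set M :=
  { a : M | a ∈ eMe e ∧ ∃ b ∈ eMe e, a * b = e ∧ b * a = e }

/-- The set `J_e := eMe ∖ Γ_e`. -/
def Je {M : Type*} [Monoid M] (e : M) : Set M := eMe e \ unitSet e

set_option linter.unusedSectionVars false

section MonoidLemmas

variable {M : Type*} [Monoid M] {e : M}

lemma eMe.mul_mem {a b : M} (ha : a ∈ eMe e) (hb : b ∈ eMe e) : a * b ∈ eMe e := by
  obtain ⟨c, rfl⟩ := ha; obtain ⟨d, rfl⟩ := hb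
  exact ⟨c * e * (e * d), by simp [mul_assoc]⟩

lemma eMe.e_mem (he : e * e = e) : e ∈ eMe e := ⟨e, by rw [he, he]⟩

lemma eMe.e_mul (he : e * e = e) {a : M} (ha : a ∈ eMe e) : e * a = a := by
  obtain ⟨c, rfl⟩ := ha; rw [← mul_assoc, ← mul_assoc, he]

lemma eMe.mul_e (he : e * e = e) {a : M} (ha : a ∈ eMe e) : a * e = a := by
  obtain ⟨c, rfl⟩ := ha; rw [mul_assoc, he]

variable [Finite M]

lemma eMe.inv_comm (he : e * e = e) {x w : M} (hx : x ∈ eMe e) (hw : w ∈ eMe e)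
    (hxw : x * w = e) : w * x = e := by
  let φ : {z : M // z ∈ eMe e} → {z : M // z ∈ eMe e} :=
    fun z => ⟨w * z, eMe.mul_mem hw z.2⟩
  have hinj : Function.Injective φ := by
    have hli : Function.LeftInverse
        (fun z : {z : M // z ∈ eMe e} => (⟨x * z, eMe.mul_mem hx z.2⟩ : {z : M // z ∈ eMe e}))
        φ := by
      intro z
      apply Subtype.ext
      show x * (w * z.1) = z.1
      rw [← mul_assoc, hxw, eMe.e_mul he z.2]
    exact hli.injective
  obtain ⟨z, hz⟩ := (Finite.injective_iff_surjective.mp hinj) ⟨e, eMe.e_mem he⟩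
  have hwz : w * z.1 = e := congrArg Subtype.val hz
  have hxz : x = z.1 := by
    calc x = x * e := (eMe.mul_e he hx).symm
    _ = x * (w * z.1) := by rw [hwz]
    _ = (x * w) * z.1 := by rw [mul_assoc]
    _ = e * z.1 := by rw [hxw]
    _ = z.1 := eMe.e_mul he z.2
  rw [hxz, hwz]

lemma unitSet.e_mem (he : e * e = e) : e ∈ unitSet e :=
  ⟨eMe.e_mem he, e, eMe.e_mem he, he, he⟩

lemma unitSet.mul_mem (he : e * e = e) {a b : M} (ha : a ∈ unitSet e) (hb : b ∈ unitSet e) :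
    a * b ∈ unitSet e := by
  obtain ⟨ha1, a', ha', haa', ha'a⟩ := ha
  obtain ⟨hb1, b', hb', hbb', hb'b⟩ := hb
  refine ⟨eMe.mul_mem ha1 hb1, b' * a', eMe.mul_mem hb' ha', ?_, ?_⟩
  · calc a * b * (b' * a') = a * (b * b') * a' := by simp [mul_assoc]
    _ = a * e * a' := by rw [hbb']
    _ = a * a' := by rw [eMe.mul_e he ha1]
    _ = e := haa'
  · calc b' * a' * (a * b) = b' * (a' * a) * b := by simp [mul_assoc]
    _ = b' * e * b := by rw [ha'a]
    _ = b' * b := by rw [eMe.mul_e he hb']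
    _ = e := hb'b

lemma unitSet.factor (he : e * e = e) {a b : M} (ha : a ∈ eMe e) (hb : b ∈ eMe e)
    (h : a * b ∈ unitSet e) : a ∈ unitSet e ∧ b ∈ unitSet e := by
  obtain ⟨-, v, hv, hab_v, hv_ab⟩ := h
  constructor
  · have h1 : a * (b * v) = e := by rw [← mul_assoc]; exact hab_v
    exact ⟨ha, b * v, eMe.mul_mem hb hv, h1, eMe.inv_comm he ha (eMe.mul_mem hb hv) h1⟩
  · have h1 : (v * a) * b = e := by rw [mul_assoc]; exact hv_ab
    exact ⟨hb, v * a, eMe.mul_mem hv ha,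
      eMe.inv_comm he (eMe.mul_mem hv ha) hb h1, h1⟩

end MonoidLemmas

section GammaGroup

variable {M : Type*} [Monoid M]

def Gamma (E : {x : M // x * x = x}) : Type _ := {a : M // a ∈ unitSet E.1}

instance (E : {x : M // x * x = x}) [Finite M] : Finite (Gamma E) :=
  inferInstanceAs (Finite {a : M // a ∈ unitSet E.1})

noncomputable instance Gamma.instGroup [Finite M] (E : {x : M // x * x = x}) : Group (Gamma E) where
  mul a b := ⟨a.1 * b.1, unitSet.mul_mem E.2 a.2 b.2⟩
  one := ⟨E.1, unitSet.e_mem E.2⟩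
  inv a := ⟨a.2.2.choose,
    ⟨a.2.2.choose_spec.1, a.1, a.2.1, a.2.2.choose_spec.2.2, a.2.2.choose_spec.2.1⟩⟩
  mul_assoc a b c := Subtype.ext (mul_assoc a.1 b.1 c.1)
  one_mul a := Subtype.ext (eMe.e_mul E.2 a.2.1)
  mul_one a := Subtype.ext (eMe.mul_e E.2 a.2.1)
  inv_mul_cancel a := Subtype.ext a.2.2.choose_spec.2.2

def Gamma.mk (E : {x : M // x * x = x}) (m : M) (hm : m ∈ unitSet E.1) : Gamma E := ⟨m, hm⟩

@[simp] lemma Gamma.mk_val [Finite M] (E : {x : M // x * x = x}) (m : M)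
    (hm : m ∈ unitSet E.1) : (Gamma.mk E m hm).1 = m := rfl

lemma Gamma.mk_mul [Finite M] (E : {x : M // x * x = x}) {m n : M} (hm : m ∈ unitSet E.1)
    (hn : n ∈ unitSet E.1) :
    Gamma.mk E m hm * Gamma.mk E n hn = Gamma.mk E (m * n) (unitSet.mul_mem E.2 hm hn) := rfl

@[simp] lemma Gamma.mul_val [Finite M] (E : {x : M // x * x = x}) (a b : Gamma E) :
    ((a * b).1 : M) = a.1 * b.1 := rfl

@[simp] lemma Gamma.one_val [Finite M] (E : {x : M // x * x = x}) :
    ((1 : Gamma E).1 : M) = E.1 := rfl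

end GammaGroup

section JacobsonLemmas

variable {R : Type*} [Ring R]

lemma smul_eq_zero_of_mem_jacobson {V : Type*} [AddCommGroup V] [Module R V]
    [IsSimpleModule R V] {x : R} (hx : x ∈ (⊥ : Ideal R).jacobson) (v : V) : x • v = 0 := by
  rcases eq_or_ne v 0 with rfl | hv
  · simp
  have hm := IsSimpleModule.ker_toSpanSingleton_isMaximal R hv
  have hle : (⊥ : Ideal R).jacobson ≤ LinearMap.ker (LinearMap.toSpanSingleton R V v) :=
    sInf_le ⟨bot_le, hm⟩
  simpa using hle hx

lemma mul_mem_jacobson_right {x : R} (hx : x ∈ (⊥ : Ideal R).jacobson) (r : R) :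
    x * r ∈ (⊥ : Ideal R).jacobson := by
  refine Submodule.mem_sInf.mpr ?_
  rintro m ⟨-, hm⟩
  haveI : IsSimpleModule R (R ⧸ m) := isSimpleModule_iff_isCoatom.mpr (Ideal.isMaximal_def.mp hm)
  have h0 : x • (Submodule.Quotient.mk r : R ⧸ m) = 0 := smul_eq_zero_of_mem_jacobson hx _
  have h1 : (Submodule.Quotient.mk (x * r) : R ⧸ m) = 0 := by
    rw [← smul_eq_mul, Submodule.Quotient.mk_smul, h0]
  exact (Submodule.Quotient.mk_eq_zero m).mp h1

lemma eq_zero_of_mem_jacobson_of_semisimple [IsSemisimpleRing R] {x : R}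
    (hx : x ∈ (⊥ : Ideal R).jacobson) : x = 0 := by
  have h1 : (1 : R) ∈ sSup {m : Submodule R R | IsSimpleModule R m} := by
    rw [IsSemisimpleModule.sSup_simples_eq_top]; trivial
  rw [sSup_eq_iSup'] at h1
  have key : x * 1 = 0 := by
    refine Submodule.iSup_induction (motive := fun y => x * y = 0) _ h1 ?_ (by simp) ?_
    · rintro ⟨S, hS⟩ y hy
      haveI : IsSimpleModule R S := hS
      have h0 : x • (⟨y, hy⟩ : S) = 0 := smul_eq_zero_of_mem_jacobson hx _
      have := congrArg Subtype.val h0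
      simpa using this
    · intro y z hy hz; rw [mul_add, hy, hz, add_zero]
  simpa using key

end JacobsonLemmas

section SupportedLemmas

variable {M : Type*} [Monoid M] {k : Type*} [Field k]

open MonoidAlgebra Finsupp

lemma span_of_image_eq_supported (S : Set M) :
    Submodule.span k (⇑(MonoidAlgebra.of k M) '' S) = MonoidAlgebra.supported k k S := by
  rw [MonoidAlgebra.supported_eq_span_single]
  congr 1

lemma supported_induction {S : Set M} {p : MonoidAlgebra k M → Prop} (h0 : p 0)
    (hsingle : ∀ m ∈ S, ∀ c : k, p (MonoidAlgebra.single m c))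
    (hadd : ∀ f g, p f → p g → p (f + g)) {f : MonoidAlgebra k M}
    (hf : f ∈ MonoidAlgebra.supported k k S) : p f := by
  rw [MonoidAlgebra.mem_supported] at hf
  have := MonoidAlgebra.sum_coeff_single f
  rw [← this]
  unfold Finsupp.sum
  refine Finset.sum_induction _ _ hadd h0 ?_
  intro m hm
  exact hsingle m (hf hm) (f.coeff m)

lemma mul_mem_supported {S : Set M} (hS : ∀ a ∈ S, ∀ b ∈ S, a * b ∈ S)
    {f g : MonoidAlgebra k M} (hf : f ∈ MonoidAlgebra.supported k k S)
    (hg : g ∈ MonoidAlgebra.supported k k S) : f * g ∈ MonoidAlgebra.supported k k S := by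
  classical
  rw [MonoidAlgebra.mem_supported] at hf hg ⊢
  refine subset_trans (Finset.coe_subset.mpr (MonoidAlgebra.support_coeff_mul_subset f g)) ?_
  intro x hx
  simp only [Finset.coe_mul, Set.mem_mul] at hx
  obtain ⟨a, ha, b, hb, rfl⟩ := hx
  exact hS a (hf ha) b (hg hb)

lemma ma_single_mem_supported {S : Set M} {m : M} (c : k) (hm : m ∈ S) :
    MonoidAlgebra.single m c ∈ MonoidAlgebra.supported k k S :=
  MonoidAlgebra.mem_supported.mpr
    (Set.Subset.trans Finsupp.support_single_subset (Finset.singleton_subset_set_iff.2 hm))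

lemma corner_mem_supported {e : M} (y : MonoidAlgebra k M) :
    MonoidAlgebra.of k M e * y * MonoidAlgebra.of k M e ∈ MonoidAlgebra.supported k k (eMe e) := by
  induction y using MonoidAlgebra.induction_linear with
  | zero => simp
  | add f g hf hg => rw [mul_add, add_mul]; exact Submodule.add_mem _ hf hg
  | single m c =>
      rw [MonoidAlgebra.of_apply, MonoidAlgebra.single_mul_single,
        MonoidAlgebra.single_mul_single, one_mul, mul_one]
      exact ma_single_mem_supported _ ⟨m, rfl⟩

lemma e_mul_supported {e : M} (he : e * e = e) {f : MonoidAlgebra k M}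
    (hf : f ∈ MonoidAlgebra.supported k k (eMe e)) : MonoidAlgebra.of k M e * f = f := by
  refine supported_induction (p := fun g => MonoidAlgebra.of k M e * g = g)
    (by simp) ?_ ?_ hf
  · intro m hm c
    rw [MonoidAlgebra.of_apply, MonoidAlgebra.single_mul_single, one_mul, eMe.e_mul he hm]
  · intro f g hf' hg'
    rw [mul_add, hf', hg']

lemma mul_e_supported {e : M} (he : e * e = e) {f : MonoidAlgebra k M}
    (hf : f ∈ MonoidAlgebra.supported k k (eMe e)) : f * MonoidAlgebra.of k M e = f := by
  refine supported_induction (p := fun g => g * MonoidAlgebra.of k M e = g)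
    (by simp) ?_ ?_ hf
  · intro m hm c
    rw [MonoidAlgebra.of_apply, MonoidAlgebra.single_mul_single, mul_one, eMe.mul_e he hm]
  · intro f g hf' hg'
    rw [add_mul, hf', hg']

end SupportedLemmas

section PiSigma

universe uM uk

variable {M : Type uM} [Monoid M] [Finite M] {k : Type uk} [Field k]

open MonoidAlgebra Finsupp

variable (k) in
/-- The target group algebra, with everything `ULift`ed to a common universe. -/
abbrev R0 (E : {x : M // x * x = x}) : Type (max uM uk) :=
  MonoidAlgebra (ULift.{uM} k) (ULift.{uk} (Gamma E))

noncomputable def piMap (E : {x : M // x * x = x}) (f : MonoidAlgebra k M) : R0 k E :=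
  MonoidAlgebra.ofCoeff (Finsupp.equivFunOnFinite.symm (fun γ => ULift.up (f.coeff γ.down.1)))

@[simp] lemma piMap_apply (E : {x : M // x * x = x}) (f : MonoidAlgebra k M)
    (γ : ULift (Gamma E)) : (piMap E f).coeff γ = ULift.up (f.coeff γ.down.1) := by
  simp [piMap]

lemma piMap_add (E : {x : M // x * x = x}) (f g : MonoidAlgebra k M) :
    piMap E (f + g) = piMap E f + piMap E g := by
  ext γ
  rw [piMap_apply, MonoidAlgebra.coeff_add, Finsupp.add_apply, MonoidAlgebra.coeff_add,
    Finsupp.add_apply, piMap_apply, piMap_apply]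
  rfl

lemma piMap_zero (E : {x : M // x * x = x}) : piMap E (0 : MonoidAlgebra k M) = 0 := by
  ext γ; simp

lemma piMap_sub (E : {x : M // x * x = x}) (f g : MonoidAlgebra k M) :
    piMap E (f - g) = piMap E f - piMap E g := by
  ext γ
  rw [piMap_apply, MonoidAlgebra.coeff_sub, Finsupp.sub_apply, MonoidAlgebra.coeff_sub,
    Finsupp.sub_apply, piMap_apply, piMap_apply]
  rfl

lemma piMap_single_mem (E : {x : M // x * x = x}) {m : M} (hm : m ∈ unitSet E.1) (c : k) :
    piMap E (MonoidAlgebra.single m c) =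
      MonoidAlgebra.single (ULift.up (Gamma.mk E m hm)) (ULift.up c) := by
  classical
  ext γ
  rw [piMap_apply, MonoidAlgebra.coeff_single_apply, MonoidAlgebra.coeff_single_apply]
  by_cases h : γ.down.1 = m
  · have h2 : ULift.up (Gamma.mk E m hm) = γ := by
      cases γ with
      | up g => exact congrArg ULift.up (Subtype.ext h.symm)
    rw [if_pos h.symm, if_pos h2]
  · have h2 : ¬ (ULift.up (Gamma.mk E m hm) = γ) := by
      intro hc
      exact h (hc ▸ rfl)
    rw [if_neg (fun hc => h hc.symm), if_neg h2]
    rfl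

lemma piMap_single_not_mem (E : {x : M // x * x = x}) {m : M} (hm : m ∉ unitSet E.1) (c : k) :
    piMap E (MonoidAlgebra.single m c) = 0 := by
  classical
  ext γ
  rw [piMap_apply, MonoidAlgebra.coeff_single_apply]
  rw [if_neg (fun hc : m = γ.down.1 => hm (hc ▸ γ.down.2))]
  rfl

lemma piMap_of_e (E : {x : M // x * x = x}) :
    piMap E (MonoidAlgebra.of k M E.1) = 1 := by
  rw [MonoidAlgebra.of_apply, piMap_single_mem E (unitSet.e_mem E.2), MonoidAlgebra.one_def]
  rfl

lemma piMap_mul (E : {x : M // x * x = x}) {f g : MonoidAlgebra k M}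
    (hf : f ∈ MonoidAlgebra.supported k k (eMe E.1)) (hg : g ∈ MonoidAlgebra.supported k k (eMe E.1)) :
    piMap E (f * g) = piMap E f * piMap E g := by
  refine supported_induction
    (p := fun f => piMap E (f * g) = piMap E f * piMap E g) ?_ ?_ ?_ hf
  · simp [piMap_zero]
  · intro m hm c
    refine supported_induction
      (p := fun g : MonoidAlgebra k M =>
        piMap E (MonoidAlgebra.single m c * g) =
        piMap E (MonoidAlgebra.single m c) * piMap E g) ?_ ?_ ?_ hg
    · simp [piMap_zero]
    · intro n hn d
      rw [MonoidAlgebra.single_mul_single]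
      by_cases hmu : m ∈ unitSet E.1
      · by_cases hnu : n ∈ unitSet E.1
        · rw [piMap_single_mem E hmu, piMap_single_mem E hnu,
            piMap_single_mem E (unitSet.mul_mem E.2 hmu hnu),
            MonoidAlgebra.single_mul_single]
          rfl
        · have : m * n ∉ unitSet E.1 := fun hc => hnu ((unitSet.factor E.2 hm hn hc).2)
          rw [piMap_single_not_mem E this, piMap_single_not_mem E hnu, mul_zero]
      · have : m * n ∉ unitSet E.1 := fun hc => hmu ((unitSet.factor E.2 hm hn hc).1)
        rw [piMap_single_not_mem E this, piMap_single_not_mem E hmu, zero_mul]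
    · intro g₁ g₂ h1 h2
      rw [mul_add, piMap_add, piMap_add, h1, h2, mul_add]
  · intro f₁ f₂ h1 h2
    rw [add_mul, piMap_add, piMap_add, h1, h2, add_mul]

noncomputable def sigmaMap (E : {x : M // x * x = x}) (w : R0 k E) : MonoidAlgebra k M :=
  MonoidAlgebra.ofCoeff (Finsupp.mapDomain (fun γ : ULift (Gamma E) => γ.down.1)
    (Finsupp.mapRange ULift.down rfl w.coeff))

lemma sigmaMap_supported (E : {x : M // x * x = x}) (w : R0 k E) :
    sigmaMap E w ∈ MonoidAlgebra.supported k k (eMe E.1) := by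
  classical
  rw [MonoidAlgebra.mem_supported]
  refine subset_trans (Finset.coe_subset.mpr Finsupp.mapDomain_support) ?_
  intro x hx
  simp only [Finset.coe_image, Set.mem_image] at hx
  obtain ⟨γ, -, rfl⟩ := hx
  exact γ.down.2.1

lemma piMap_sigmaMap (E : {x : M // x * x = x}) (w : R0 k E) :
    piMap E (sigmaMap E w) = w := by
  ext γ
  rw [piMap_apply]
  have hinj : Function.Injective (fun γ : ULift (Gamma E) => γ.down.1) := by
    intro a b hab
    cases a; cases b
    exact congrArg ULift.up (Subtype.ext hab)
  have := Finsupp.mapDomain_apply hinj (Finsupp.mapRange ULift.down rfl w.coeff) γ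
  rw [sigmaMap, MonoidAlgebra.coeff_ofCoeff, this, Finsupp.mapRange_apply]

end PiSigma

section CoeffVanish

universe uM uk

variable {M : Type uM} [Monoid M] [Finite M] {k : Type uk} [Field k]

open MonoidAlgebra Finsupp

lemma coeff_vanish (E : {x : M // x * x = x})
    (hk : IsUnit ((Nat.card ↥(unitSet E.1) : k)))
    {x : MonoidAlgebra k M} (hx : x ∈ (⊥ : Ideal (MonoidAlgebra k M)).jacobson)
    (hsupp : x ∈ MonoidAlgebra.supported k k (eMe E.1)) :
    ∀ m ∈ unitSet E.1, x.coeff m = 0 := by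
  letI : Fintype (Gamma E) := Fintype.ofFinite _
  haveI : NeZero ((Fintype.card (ULift.{uk} (Gamma E)) : ULift.{uM} k)) := by
    constructor
    intro h0
    have h1 : ((Fintype.card (ULift.{uk} (Gamma E)) : ℕ) : k) = 0 := by
      have := congrArg (ULift.ringEquiv : ULift k ≃+* k) h0
      rwa [map_natCast, map_zero] at this
    rw [Fintype.card_ulift] at h1
    have h2 : (Nat.card ↥(unitSet E.1) : k) = (Fintype.card (Gamma E) : k) := by
      have h3 : Nat.card (Gamma E) = Fintype.card (Gamma E) := Nat.card_eq_fintype_card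
      calc (Nat.card ↥(unitSet E.1) : k) = (Nat.card (Gamma E) : k) := rfl
      _ = (Fintype.card (Gamma E) : k) := by rw [h3]
    exact hk.ne_zero (h2.trans h1)
  haveI : NeZero ((Nat.card (ULift.{uk} (Gamma E)) : ULift.{uM} k)) := by
    rw [Nat.card_eq_fintype_card]; infer_instance
  haveI : IsSemisimpleRing (R0 k E) := by
    set_option synthInstance.maxHeartbeats 1000000 in infer_instance
  have hpix : piMap E x ∈ (⊥ : Ideal (R0 k E)).jacobson := by
    rw [Ideal.mem_jacobson_iff] at hx ⊢
    intro y
    set v : MonoidAlgebra k M := sigmaMap E (-y) with hv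
    obtain ⟨q, hq⟩ := hx (-v)
    rw [Ideal.mem_bot] at hq
    -- hq : q * -v * x + q - 1 = 0
    have hq1 : q * (1 - v * x) = 1 := by
      have h2 : q * (1 - v * x) - 1 = q * -v * x + q - 1 := by
        rw [mul_sub, mul_one, mul_neg, neg_mul, ← mul_assoc]
        abel
      have h3 : q * (1 - v * x) - 1 = 0 := by rw [h2, hq]
      calc q * (1 - v * x) = q * (1 - v * x) - 1 + 1 := by abel
      _ = 0 + 1 := by rw [h3]
      _ = 1 := by rw [zero_add]
    set B : MonoidAlgebra k M := MonoidAlgebra.of k M E.1 - v * x with hB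
    have hvs : v ∈ MonoidAlgebra.supported k k (eMe E.1) := sigmaMap_supported E _
    have hvx : v * x ∈ MonoidAlgebra.supported k k (eMe E.1) :=
      mul_mem_supported (fun a ha b hb => eMe.mul_mem ha hb) hvs hsupp
    have hBs : B ∈ MonoidAlgebra.supported k k (eMe E.1) := by
      refine Submodule.sub_mem _ ?_ hvx
      rw [MonoidAlgebra.of_apply]
      exact ma_single_mem_supported _ (eMe.e_mem E.2)
    have hBe : B = (1 - v * x) * MonoidAlgebra.of k M E.1 := by
      rw [sub_mul, one_mul, mul_e_supported E.2 hvx]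
    have hcorner : (MonoidAlgebra.of k M E.1 * q * MonoidAlgebra.of k M E.1) * B
        = MonoidAlgebra.of k M E.1 := by
      calc (MonoidAlgebra.of k M E.1 * q * MonoidAlgebra.of k M E.1) * B
          = MonoidAlgebra.of k M E.1 * q * (MonoidAlgebra.of k M E.1 * B) := by
            rw [mul_assoc (MonoidAlgebra.of k M E.1 * q)]
        _ = MonoidAlgebra.of k M E.1 * q * B := by rw [e_mul_supported E.2 hBs]
        _ = MonoidAlgebra.of k M E.1 * (q * ((1 - v * x) * MonoidAlgebra.of k M E.1)) := by
            rw [mul_assoc, ← hBe]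
        _ = MonoidAlgebra.of k M E.1 * ((q * (1 - v * x)) * MonoidAlgebra.of k M E.1) := by
            rw [mul_assoc q]
        _ = MonoidAlgebra.of k M E.1 * MonoidAlgebra.of k M E.1 := by rw [hq1, one_mul]
        _ = MonoidAlgebra.of k M E.1 := by
            rw [← map_mul, E.2]
    refine ⟨piMap E (MonoidAlgebra.of k M E.1 * q * MonoidAlgebra.of k M E.1), ?_⟩
    rw [Ideal.mem_bot]
    have hqe : MonoidAlgebra.of k M E.1 * q * MonoidAlgebra.of k M E.1
        ∈ MonoidAlgebra.supported k k (eMe E.1) := corner_mem_supported q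
    have hmain : piMap E (MonoidAlgebra.of k M E.1 * q * MonoidAlgebra.of k M E.1) * piMap E B
        = 1 := by
      rw [← piMap_mul E hqe hBs, hcorner, piMap_of_e]
    have hpB : piMap E B = 1 + y * piMap E x := by
      rw [hB, piMap_sub, piMap_of_e, piMap_mul E hvs hsupp, hv, piMap_sigmaMap]
      have hneg : -y * piMap E x = -(y * piMap E x) := neg_mul y (piMap E x)
      rw [hneg, sub_neg_eq_add]
    rw [hpB] at hmain
    -- hmain : z * (1 + y * πx) = 1 ; goal : z * y * πx + z - 1 = 0
    rw [mul_add, mul_one, ← mul_assoc] at hmain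
    rw [← hmain]
    abel
  have hz : piMap E x = 0 := eq_zero_of_mem_jacobson_of_semisimple hpix
  intro m hm
  have := congrArg (fun w => w.coeff (ULift.up (Gamma.mk E m hm))) hz
  simp only [piMap_apply, MonoidAlgebra.coeff_zero, Finsupp.coe_zero, Pi.zero_apply] at this
  have := congrArg ULift.down this
  simpa using this

end CoeffVanish

section HardDirection

variable {M : Type*} [Monoid M] [Finite M] {k : Type*} [Field k]

open MonoidAlgebra Finsupp

lemma hard_direction (hreg : ∀ s : M, ∃ t : M, s * t * s = s)
    {u : MonoidAlgebra k M}
    (hu : ∀ e : M, e * e = e → ∀ a b : MonoidAlgebra k M,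
      MonoidAlgebra.of k M e * a * u * b * MonoidAlgebra.of k M e ∈
        Submodule.span k (⇑(MonoidAlgebra.of k M) '' Je e)) :
    u ∈ (⊥ : Ideal (MonoidAlgebra k M)).jacobson := by
  refine Submodule.mem_sInf.mpr ?_
  rintro m ⟨-, hm⟩
  haveI : IsSimpleModule (MonoidAlgebra k M) (MonoidAlgebra k M ⧸ m) :=
    isSimpleModule_iff_isCoatom.mpr (Ideal.isMaximal_def.mp hm)
  haveI := IsSimpleModule.nontrivial (MonoidAlgebra k M) (MonoidAlgebra k M ⧸ m)
  suffices hall : ∀ v : (MonoidAlgebra k M) ⧸ m, u • v = 0 by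
    have h1 := hall (Submodule.Quotient.mk 1)
    rw [← Submodule.Quotient.mk_smul, smul_eq_mul, mul_one] at h1
    exact (Submodule.Quotient.mk_eq_zero m).mp h1
  by_contra hcon
  push_neg at hcon
  obtain ⟨v₀, hv₀⟩ := hcon
  set S : Set M := {f : M | f * f = f ∧ ∃ v : (MonoidAlgebra k M) ⧸ m,
    MonoidAlgebra.of k M f • v ≠ 0} with hSdef
  have hSne : S.Nonempty := by
    obtain ⟨v, hv⟩ := exists_ne (0 : (MonoidAlgebra k M) ⧸ m)
    exact ⟨1, one_mul 1, v, by rw [map_one, one_smul]; exact hv⟩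
  set c : M → ℕ := fun f => Set.ncard {x : M | ∃ p q : M, x = p * f * q} with hcdef
  have hTne : (c '' S).Nonempty := hSne.image c
  obtain ⟨e, heS, hce⟩ := Nat.sInf_mem hTne
  have hmin : ∀ f ∈ S, c e ≤ c f := by
    intro f hf
    rw [hce]
    exact Nat.sInf_le ⟨f, hf, rfl⟩
  obtain ⟨he, v'', hv''⟩ := heS
  have hee : ∀ x : M, e * (e * x) = e * x := fun x => by rw [← mul_assoc, he]
  have step2 : ∀ s ∈ Je e, ∀ w : (MonoidAlgebra k M) ⧸ m,
      MonoidAlgebra.of k M s • (MonoidAlgebra.of k M e • w) = 0 := by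
    intro s hs w
    by_contra hne
    obtain ⟨c0, hc0⟩ := hs.1
    obtain ⟨t, ht⟩ := hreg s
    have hf : (t * s) * (t * s) = t * s := by
      calc (t * s) * (t * s) = t * (s * t * s) := by simp [mul_assoc]
      _ = t * s := by rw [ht]
    have hfS : t * s ∈ S := by
      refine ⟨hf, MonoidAlgebra.of k M e • w, ?_⟩
      intro h0
      apply hne
      have h1 : MonoidAlgebra.of k M s •
          (MonoidAlgebra.of k M (t * s) • (MonoidAlgebra.of k M e • w)) = 0 := by
        rw [h0, smul_zero]
      rwa [smul_smul, ← map_mul,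
        show s * (t * s) = s from by rw [← mul_assoc]; exact ht] at h1
    have hsub : {x : M | ∃ p q : M, x = p * (t * s) * q}
        ⊆ {x : M | ∃ p q : M, x = p * e * q} := by
      rintro x ⟨p, q, rfl⟩
      exact ⟨p * t * e * c0, q, by rw [hc0]; simp [mul_assoc]⟩
    have heq : {x : M | ∃ p q : M, x = p * (t * s) * q}
        = {x : M | ∃ p q : M, x = p * e * q} :=
      Set.eq_of_subset_of_ncard_le hsub (hmin _ hfS) (Set.toFinite _)
    have heMfM : e ∈ {x : M | ∃ p q : M, x = p * (t * s) * q} := by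
      rw [heq]; exact ⟨1, 1, by rw [one_mul, mul_one]⟩
    obtain ⟨p, q, hpq⟩ := heMfM
    have hx1 : e * (p * t) * e ∈ eMe e := ⟨p * t, rfl⟩
    have hy1 : e * q * e ∈ eMe e := ⟨q, rfl⟩
    have hxsy : (e * (p * t) * e) * s * (e * q * e) = e := by
      have h1 : (e * (p * t) * e) * s * (e * q * e) = e * (p * (t * s) * q) * e := by
        rw [hc0]
        simp only [mul_assoc, hee]
      rw [h1, ← hpq, he, he]
    have hyx_s : (e * q * e) * (e * (p * t) * e) * s = e := by
      have h3 := eMe.inv_comm he (eMe.mul_mem hx1 hs.1) hy1 hxsy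
      rw [← mul_assoc] at h3
      exact h3
    have hs_xy : s * ((e * q * e) * (e * (p * t) * e)) = e := by
      have h4 : (e * (p * t) * e) * (s * (e * q * e)) = e := by
        rw [← mul_assoc]; exact hxsy
      have h5 := eMe.inv_comm he hx1 (eMe.mul_mem hs.1 hy1) h4
      rw [mul_assoc] at h5
      exact h5
    exact hs.2 ⟨hs.1, (e * q * e) * (e * (p * t) * e),
      eMe.mul_mem hy1 hx1, hs_xy, hyx_s⟩
  have step2' : ∀ X : MonoidAlgebra k M, X ∈ MonoidAlgebra.supported k k (Je e) →
      ∀ w : (MonoidAlgebra k M) ⧸ m, X • (MonoidAlgebra.of k M e • w) = 0 := by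
    intro X hX w
    refine supported_induction (p := fun X : MonoidAlgebra k M =>
      X • (MonoidAlgebra.of k M e • w) = 0)
      (by show (0 : MonoidAlgebra k M) • (MonoidAlgebra.of k M e • w) = 0; rw [zero_smul])
      ?_ ?_ hX
    · intro s hs cc
      have hsingle : MonoidAlgebra.single s cc
          = MonoidAlgebra.single (1 : M) cc * MonoidAlgebra.of k M s := by
        rw [MonoidAlgebra.of_apply, MonoidAlgebra.single_mul_single, one_mul, mul_one]
      show MonoidAlgebra.single s cc • (MonoidAlgebra.of k M e • w) = 0
      rw [hsingle, mul_smul, step2 s hs w, smul_zero]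
    · intro f g hf hg
      rw [add_smul, hf, hg, add_zero]
  have hv''ne : MonoidAlgebra.of k M e • v'' ≠ 0 := hv''
  have hmem1 : v₀ ∈ Submodule.span (MonoidAlgebra k M) {MonoidAlgebra.of k M e • v''} := by
    rw [IsSimpleModule.span_singleton_eq_top (MonoidAlgebra k M) hv''ne]
    exact Submodule.mem_top
  obtain ⟨c1, hc1⟩ := Submodule.mem_span_singleton.mp hmem1
  have hmem2 : v'' ∈ Submodule.span (MonoidAlgebra k M) {u • v₀} := by
    rw [IsSimpleModule.span_singleton_eq_top (MonoidAlgebra k M) hv₀]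
    exact Submodule.mem_top
  obtain ⟨d1, hd1⟩ := Submodule.mem_span_singleton.mp hmem2
  set X := MonoidAlgebra.of k M e * d1 * u * c1 * MonoidAlgebra.of k M e with hXd
  have hXv : X • v'' = MonoidAlgebra.of k M e • v'' := by
    conv_rhs => rw [← hd1, ← hc1]
    rw [hXd]
    simp only [smul_smul, mul_assoc]
  have hXJ : X ∈ MonoidAlgebra.supported k k (Je e) := by
    rw [← span_of_image_eq_supported]
    exact hu e he d1 c1
  have hXe : X * MonoidAlgebra.of k M e = X := by
    rw [hXd, mul_assoc _ (MonoidAlgebra.of k M e), ← map_mul, he]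
  have hzero : MonoidAlgebra.of k M e • v'' = 0 := by
    rw [← hXv, ← hXe, mul_smul]
    exact step2' X hXJ v''
  exact hv''ne hzero

end HardDirection


/-- Let `M` be a finite regular monoid and `k` a field such that
`|Γ_e|` is invertible in `k` for every idempotent `e ∈ M`.  Then the Jacobson radical of
`A := MonoidAlgebra k M` equals
`{ u ∈ A : ∀ idempotent e ∈ M, e·A·u·A·e ⊆ kJ_e }`,
where `kJ_e` is the `k`-linear span of `J_e = eMe ∖ Γ_e` in `A`. -/
theorem statement13 {M : Type*} [Monoid M] [Finite M]
    (hreg : ∀ s : M, ∃ t : M, s * t * s = s)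
    {k : Type*} [Field k]
    (hk : ∀ e : M, e * e = e → IsUnit ((Nat.card ↥(unitSet e) : k))) :
    ((⊥ : Ideal (MonoidAlgebra k M)).jacobson : Set (MonoidAlgebra k M)) =
      { u : MonoidAlgebra k M | ∀ e : M, e * e = e →
        ∀ a b : MonoidAlgebra k M,
          MonoidAlgebra.of k M e * a * u * b * MonoidAlgebra.of k M e ∈
            Submodule.span k (⇑(MonoidAlgebra.of k M) '' Je e) } := by
  ext u
  simp only [SetLike.mem_coe, Set.mem_setOf_eq]
  constructor
  · intro hu e he a b
    have hx1 : MonoidAlgebra.of k M e * a * u ∈ (⊥ : Ideal (MonoidAlgebra k M)).jacobson :=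
      Ideal.mul_mem_left _ _ hu
    have hx2 := mul_mem_jacobson_right (mul_mem_jacobson_right hx1 b) (MonoidAlgebra.of k M e)
    have hsupp : MonoidAlgebra.of k M e * a * u * b * MonoidAlgebra.of k M e
        ∈ MonoidAlgebra.supported k k (eMe e) := by
      have h0 := corner_mem_supported (k := k) (e := e) (a * u * b)
      have heq : MonoidAlgebra.of k M e * (a * u * b) * MonoidAlgebra.of k M e
          = MonoidAlgebra.of k M e * a * u * b * MonoidAlgebra.of k M e := by
        simp [mul_assoc]
      rwa [heq] at h0
    have hvan := coeff_vanish ⟨e, he⟩ (hk e he) hx2 hsupp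
    rw [span_of_image_eq_supported, MonoidAlgebra.mem_supported]
    intro mm hmm
    rw [Finset.mem_coe, Finsupp.mem_support_iff] at hmm
    have hmem : mm ∈ eMe e := MonoidAlgebra.mem_supported.mp hsupp
      (Finset.mem_coe.mpr (Finsupp.mem_support_iff.mpr hmm))
    exact ⟨hmem, fun hunit => hmm (hvan mm hunit)⟩
  · intro hu
    exact hard_direction hreg hu
end

section
/- Let M be a finite regular monoid and let k be a field such that the order of Γ_e is invertible in k for every idempotent e ∈ M. Let A := MonoidAlgebra k M, let u be an element of the Jacobson radical of A, and let s, t ∈ M with MsM = MtM. Then s·u·t lies in the k-linear span of the set { x ∈ MsM : MxM ≠ MsM }. -/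
/-- The set `MsM = { a·s·b : a, b ∈ M }` for an element `s` of a monoid `M`. -/
def MsM {M : Type*} [Monoid M] (s : M) : Set M := { x : M | ∃ a b : M, x = a * s * b }

namespace St14

variable {M : Type*} [Monoid M]

lemma mem_MsM_self (s : M) : s ∈ MsM s := ⟨1, 1, by simp⟩

lemma MsM_mul_mem {s x : M} (h : x ∈ MsM s) (a b : M) : a * x * b ∈ MsM s := by
  obtain ⟨c, d, rfl⟩ := h
  exact ⟨a * c, d * b, by simp [mul_assoc]⟩

lemma MsM_subset {x s : M} (h : x ∈ MsM s) : MsM x ⊆ MsM s := by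
  rintro y ⟨a, b, rfl⟩
  exact MsM_mul_mem h a b

lemma eMe_left {e x : M} (he : e * e = e) (hx : x ∈ eMe e) : e * x = x := by
  obtain ⟨c, rfl⟩ := hx
  rw [← mul_assoc, ← mul_assoc, he]

lemma eMe_right {e x : M} (he : e * e = e) (hx : x ∈ eMe e) : x * e = x := by
  obtain ⟨c, rfl⟩ := hx
  rw [mul_assoc, mul_assoc, he, ← mul_assoc]

lemma eMe_mul {e x y : M} (he : e * e = e) (hx : x ∈ eMe e) (hy : y ∈ eMe e) :
    x * y ∈ eMe e := by
  obtain ⟨c, rfl⟩ := hx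
  obtain ⟨d, rfl⟩ := hy
  refine ⟨c * e * d, ?_⟩
  have hh : ∀ z : M, e * (e * z) = e * z := fun z => by rw [← mul_assoc, he]
  simp only [mul_assoc, hh]

/-- pigeonhole: in a finite monoid-with-local-identity `e`, a one-sided inverse is two-sided. -/
lemma finite_inv [Finite M] {e p b : M} (he : e * e = e) (hep : e * p = p) (hpe : p * e = p)
    (heb : e * b = b) (h : p * b = e) : b * p = e := by
  let σ := { m : M // e * m = m }
  have hφmem : ∀ m : σ, e * (p * (m : M)) = p * (m : M) := by
    intro m; rw [← mul_assoc, hep]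
  let φ : σ → σ := fun m => ⟨p * (m : M), hφmem m⟩
  have hsurj : Function.Surjective φ := by
    intro m
    refine ⟨⟨b * (m : M), by rw [← mul_assoc, heb]⟩, ?_⟩
    apply Subtype.ext
    show p * (b * (m : M)) = (m : M)
    rw [← mul_assoc, h, m.2]
  have hinj : Function.Injective φ := (Finite.injective_iff_surjective).mpr hsurj
  have h1 : φ ⟨b * p, by rw [← mul_assoc, heb]⟩ = φ ⟨e, he⟩ := by
    apply Subtype.ext
    show p * (b * p) = p * e
    rw [← mul_assoc, h, hep, hpe]
  have := hinj h1
  simpa using congrArg Subtype.val this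

lemma mul_not_unit [Finite M] {e x y : M} (he : e * e = e) (hx : x ∈ eMe e) (hy : y ∈ eMe e)
    (hxu : x ∉ unitSet e) (hu : x * y ∈ unitSet e) : False := by
  obtain ⟨-, b, hb, h1, h2⟩ := hu
  have hx2 : x * (y * b) = e := by rw [← mul_assoc]; exact h1
  have hyb : y * b ∈ eMe e := eMe_mul he hy hb
  have h3 : (y * b) * x = e :=
    finite_inv he (eMe_left he hx) (eMe_right he hx) (eMe_left he hyb) hx2
  exact hxu ⟨hx, y * b, hyb, hx2, h3⟩

end St14

instance (priority := 100) {M : Type*} [Monoid M] {k : Type*} [Semiring k] :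
    CoeFun (MonoidAlgebra k M) (fun _ => M → k) := ⟨fun w => ⇑w.coeff⟩

section Alg

open MonoidAlgebra

variable {M : Type*} [Monoid M] {k : Type*} [Field k]

namespace St14

lemma coeff_eq_zero_of_mem_span {S : Set M} {w : MonoidAlgebra k M}
    (hw : w ∈ Submodule.span k (⇑(MonoidAlgebra.of k M) '' S)) {x : M} (hx : x ∉ S) :
    w x = 0 := by
  classical
  have hle : Submodule.span k (⇑(MonoidAlgebra.of k M) '' S) ≤
      LinearMap.ker ((Finsupp.lapply (M := k) (R := k) x) ∘ₗ
        (MonoidAlgebra.coeffLinearEquiv k).toLinearMap) := by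
    rw [Submodule.span_le]
    rintro - ⟨y, hy, rfl⟩
    have hyx : y ≠ x := fun h => hx (h ▸ hy)
    simp only [LinearMap.mem_ker, SetLike.mem_coe]
    show (MonoidAlgebra.of k M y) x = 0
    rw [MonoidAlgebra.of_apply, MonoidAlgebra.coeff_single]
    exact Finsupp.single_eq_of_ne' hyx
  exact hle hw

lemma mem_span_of_coeff {S : Set M} {w : MonoidAlgebra k M}
    (h : ∀ x, w x ≠ 0 → x ∈ S) :
    w ∈ Submodule.span k (⇑(MonoidAlgebra.of k M) '' S) := by
  classical
  rw [← MonoidAlgebra.sum_coeff_single w]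
  apply Submodule.finsuppSum_mem
  intro x hx
  have hxS : x ∈ S := h x hx
  have : MonoidAlgebra.single x (w x) = (w x) • (MonoidAlgebra.of k M x) := by
    rw [MonoidAlgebra.of_apply, MonoidAlgebra.smul_single, smul_eq_mul, mul_one]
  rw [this]
  exact Submodule.smul_mem _ _ (Submodule.subset_span ⟨x, hxS, rfl⟩)

lemma of_coeff_ne_zero {a y : M} (h : (MonoidAlgebra.of k M a) y ≠ 0) : y = a := by
  classical
  by_contra hne
  apply h
  rw [MonoidAlgebra.of_apply, MonoidAlgebra.coeff_single]
  exact Finsupp.single_eq_of_ne' (fun hh => hne hh.symm)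

lemma of_mul_apply {a : M} (w : MonoidAlgebra k M) {x x₀ : M} (h₀ : a * x₀ = x)
    (h : ∀ y, w y ≠ 0 → a * y = x → y = x₀) :
    (MonoidAlgebra.of k M a * w) x = w x₀ := by
  classical
  rw [MonoidAlgebra.of_apply, MonoidAlgebra.coeff_mul, MonoidAlgebra.coeff_single]
  rw [Finsupp.sum_single_index (by simp)]
  rw [Finsupp.sum]
  rw [Finset.sum_eq_single x₀]
  · rw [if_pos h₀, one_mul]
  · intro y hy hne
    rw [if_neg]
    intro hxy
    exact hne (h y (Finsupp.mem_support_iff.mp hy) hxy)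
  · intro hx₀
    rw [Finsupp.notMem_support_iff.mp hx₀, if_pos h₀, one_mul]

lemma exists_of_mul_coeff {w₁ w₂ : MonoidAlgebra k M} {x : M} (h : (w₁ * w₂) x ≠ 0) :
    ∃ y₁ y₂, w₁ y₁ ≠ 0 ∧ w₂ y₂ ≠ 0 ∧ y₁ * y₂ = x := by
  classical
  by_contra hc
  push_neg at hc
  apply h
  rw [MonoidAlgebra.coeff_mul, Finsupp.sum]
  apply Finset.sum_eq_zero
  intro y₁ hy₁
  rw [Finsupp.sum]
  apply Finset.sum_eq_zero
  intro y₂ hy₂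
  rw [if_neg]
  exact fun hxy => (hc y₁ y₂ (Finsupp.mem_support_iff.mp hy₁) (Finsupp.mem_support_iff.mp hy₂)) hxy

lemma of_mul_mul_of_mem_span {a b : M} {w : MonoidAlgebra k M} {S : Set M}
    (h : ∀ y, w y ≠ 0 → a * y * b ∈ S) :
    MonoidAlgebra.of k M a * w * MonoidAlgebra.of k M b ∈
      Submodule.span k (⇑(MonoidAlgebra.of k M) '' S) := by
  apply mem_span_of_coeff
  intro x hx
  obtain ⟨y₁, y₂, h1, h2, h3⟩ := exists_of_mul_coeff hx
  obtain ⟨z₁, z₂, g1, g2, g3⟩ := exists_of_mul_coeff h1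
  have hz₁ : z₁ = a := of_coeff_ne_zero g1
  have hy₂ : y₂ = b := of_coeff_ne_zero h2
  subst hz₁ hy₂
  rw [← h3, ← g3]
  exact h z₂ g2

end St14

end Alg
section Star

open MonoidAlgebra

variable {M : Type*} [Monoid M] [Finite M] {k : Type*} [Field k]

namespace St14

lemma isNilpotent_of_mem_jacobson (x : MonoidAlgebra k M)
    (hx : x ∈ (⊥ : Ideal (MonoidAlgebra k M)).jacobson) : IsNilpotent x := by
  classical
  haveI : IsArtinian k (MonoidAlgebra k M) := inferInstance
  let ρ : ℕ →o (Submodule k (MonoidAlgebra k M))ᵒᵈ :=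
    ⟨fun n => LinearMap.range (LinearMap.mulRight k (x ^ n)), by
      intro n m hnm
      obtain ⟨d, rfl⟩ := Nat.exists_eq_add_of_le hnm
      intro y hy
      obtain ⟨a, rfl⟩ := hy
      refine ⟨a * x ^ d, ?_⟩
      simp only [LinearMap.mulRight_apply]
      rw [mul_assoc, ← pow_add, add_comm]⟩
  obtain ⟨n, hn⟩ := IsArtinian.monotone_stabilizes ρ
  have h1 : x ^ n ∈ LinearMap.range (LinearMap.mulRight k (x ^ (n + 1))) := by
    have heq : LinearMap.range (LinearMap.mulRight k (x ^ n)) =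
        LinearMap.range (LinearMap.mulRight k (x ^ (n + 1))) := hn (n + 1) (Nat.le_succ n)
    rw [← heq]
    exact ⟨1, by simp [LinearMap.mulRight_apply]⟩
  obtain ⟨a, ha⟩ := h1
  simp only [LinearMap.mulRight_apply] at ha
  -- ha : a * x ^ (n+1) = x ^ n
  obtain ⟨z, hz⟩ := Ideal.mem_jacobson_iff.mp hx (-a)
  rw [Submodule.mem_bot, sub_eq_zero] at hz
  -- hz : z * -a * x + z = 1
  refine ⟨n, ?_⟩
  have key : z * -a * x * x ^ n + z * x ^ n = x ^ n := by
    rw [← add_mul, hz, one_mul]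
  have h3 : z * -a * x * x ^ n = -(z * (a * x ^ (n + 1))) := by
    rw [pow_succ']
    simp [mul_assoc, mul_neg, neg_mul]
  rw [h3, ha, neg_add_cancel] at key
  exact key.symm

lemma coeff_corner_eq_zero (e : M) (he : e * e = e)
    (hke : IsUnit ((Nat.card ↥(unitSet e) : k)))
    (z : MonoidAlgebra k M)
    (hz : IsNilpotent (MonoidAlgebra.of k M e * z * MonoidAlgebra.of k M e)) :
    (MonoidAlgebra.of k M e * z * MonoidAlgebra.of k M e) e = 0 := by
  classical
  set c : MonoidAlgebra k M := MonoidAlgebra.of k M e * z * MonoidAlgebra.of k M e with hc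
  have hsupp : ∀ y, c y ≠ 0 → y ∈ eMe e := by
    intro y hy
    by_contra hy'
    have hcs : c ∈ Submodule.span k (⇑(MonoidAlgebra.of k M) '' eMe e) :=
      of_mul_mul_of_mem_span (S := eMe e) (fun y _ => ⟨y, rfl⟩)
    exact hy (coeff_eq_zero_of_mem_span hcs hy')
  haveI : Fintype ↥(unitSet e) := Fintype.ofFinite _
  let V := (↥(unitSet e) →₀ k)
  let π : MonoidAlgebra k M →ₗ[k] V := Finsupp.lsubtypeDomain (unitSet e) ∘ₗ
    (MonoidAlgebra.coeffLinearEquiv k).toLinearMap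
  let ι : V →ₗ[k] MonoidAlgebra k M := (MonoidAlgebra.coeffLinearEquiv k).symm.toLinearMap ∘ₗ
    Finsupp.lmapDomain k k Subtype.val
  let Θ : V →ₗ[k] V := π ∘ₗ (LinearMap.mulRight k c) ∘ₗ ι
  have hπ_apply : ∀ (w : MonoidAlgebra k M) (g : ↥(unitSet e)), (π w) g = w (g : M) := by
    intro w g; rfl
  have hΘ_apply : ∀ φ : V, Θ φ = π ((ι φ) * c) := by
    intro φ; rfl
  have hπι : ∀ φ : V, π (ι φ) = φ := by
    intro φ
    ext g
    rw [hπ_apply]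
    show (Finsupp.mapDomain Subtype.val φ) (g : M) = φ g
    exact Finsupp.mapDomain_apply Subtype.val_injective φ g
  have hι_supp : ∀ (φ : V) (y : M), (ι φ) y ≠ 0 → y ∈ unitSet e := by
    intro φ y hy
    by_contra hy'
    apply hy
    show (Finsupp.mapDomain Subtype.val φ) y = 0
    apply Finsupp.mapDomain_notin_range
    rw [Subtype.range_val]
    exact hy'
  have hK : ∀ w : MonoidAlgebra k M, (∀ y, w y ≠ 0 → y ∈ eMe e) → Θ (π w) = π (w * c) := by
    intro w hw
    have hd : ∀ y : M, (w - ι (π w)) y ≠ 0 → y ∈ eMe e ∧ y ∉ unitSet e := by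
      intro y hy
      by_cases hyu : y ∈ unitSet e
      · exfalso
        apply hy
        have h1 : (ι (π w)) y = w y := by
          have := Finsupp.mapDomain_apply Subtype.val_injective (π w) ⟨y, hyu⟩
          rw [hπ_apply] at this
          exact this
        rw [MonoidAlgebra.coeff_sub, Finsupp.sub_apply, h1, sub_self]
      · have hιy : (ι (π w)) y = 0 := by
          apply Finsupp.mapDomain_notin_range
          rw [Subtype.range_val]
          exact hyu
        have hwy : w y ≠ 0 := by
          rw [MonoidAlgebra.coeff_sub, Finsupp.sub_apply, hιy, sub_zero] at hy
          exact hy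
        exact ⟨hw y hwy, hyu⟩
    have h0 : π ((w - ι (π w)) * c) = 0 := by
      ext g
      rw [hπ_apply]
      show ((w - ι (π w)) * c) (g : M) = (0 : V) g
      rw [Finsupp.coe_zero, Pi.zero_apply]
      by_contra h
      obtain ⟨y₁, y₂, h1, h2, h3⟩ := exists_of_mul_coeff h
      obtain ⟨hy₁e, hy₁u⟩ := hd y₁ h1
      have hgu : y₁ * y₂ ∈ unitSet e := h3 ▸ g.2
      exact mul_not_unit he hy₁e (hsupp y₂ h2) hy₁u hgu
    have hsum : ι (π w) + (w - ι (π w)) = w := by abel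
    calc Θ (π w) = π (ι (π w) * c) := hΘ_apply _
      _ = π (ι (π w) * c) + π ((w - ι (π w)) * c) := by rw [h0, add_zero]
      _ = π ((ι (π w) + (w - ι (π w))) * c) := by rw [add_mul, map_add]
      _ = π (w * c) := by rw [hsum]
  have hpow : ∀ (r : ℕ) (w : MonoidAlgebra k M), (∀ y, w y ≠ 0 → y ∈ eMe e) →
      (Θ ^ (r + 1)) (π w) = π (w * c ^ (r + 1)) := by
    intro r
    induction r with
    | zero => intro w hw; simpa using hK w hw
    | succ r ih =>
      intro w hw
      have hwc : ∀ y, (w * c) y ≠ 0 → y ∈ eMe e := by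
        intro y hy
        obtain ⟨y₁, y₂, h1, h2, h3⟩ := exists_of_mul_coeff hy
        exact h3 ▸ eMe_mul he (hw y₁ h1) (hsupp y₂ h2)
      have : (Θ ^ (r + 1 + 1)) (π w) = (Θ ^ (r + 1)) (Θ (π w)) := by
        rw [pow_succ, Module.End.mul_apply]
      rw [this, hK w hw, ih (w * c) hwc, mul_assoc, ← pow_succ']
  obtain ⟨N, hN⟩ := hz
  have hΘnil : IsNilpotent Θ := by
    refine ⟨N + 1, ?_⟩
    apply LinearMap.ext
    intro φ
    have h1 : ∀ y, (ι φ) y ≠ 0 → y ∈ eMe e := fun y hy => (hι_supp φ y hy).1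
    have h2 := hpow N (ι φ) h1
    rw [hπι] at h2
    rw [LinearMap.zero_apply, h2, pow_succ, hN, zero_mul, mul_zero, map_zero]
  have htr0 : LinearMap.trace k V Θ = 0 := by
    have := LinearMap.isNilpotent_trace_of_isNilpotent hΘnil
    exact this.eq_zero
  have hdiag : ∀ g : ↥(unitSet e), (Θ (Finsupp.single g 1)) g = c e := by
    intro g
    have hιg : ι (Finsupp.single g 1) = MonoidAlgebra.of k M (g : M) := by
      show MonoidAlgebra.ofCoeff (Finsupp.mapDomain Subtype.val (Finsupp.single g 1)) = _
      rw [Finsupp.mapDomain_single, MonoidAlgebra.ofCoeff_single, MonoidAlgebra.of_apply]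
    rw [hΘ_apply, hπ_apply, hιg]
    obtain ⟨hge, b, hbe, hgb, hbg⟩ := g.2
    apply of_mul_apply
    · exact eMe_right he hge
    · intro y hy hgy
      have hye : y ∈ eMe e := hsupp y hy
      have : b * ((g : M) * y) = b * (g : M) := by rw [hgy]
      rw [← mul_assoc, hbg] at this
      rw [eMe_left he hye] at this
      exact this
  have htr : LinearMap.trace k V Θ = (Nat.card ↥(unitSet e) : k) * c e := by
    rw [LinearMap.trace_eq_matrix_trace k (Finsupp.basisSingleOne) Θ, Matrix.trace]
    have hentry : ∀ g : ↥(unitSet e),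
        Matrix.diag (LinearMap.toMatrix Finsupp.basisSingleOne Finsupp.basisSingleOne Θ) g
          = c e := by
      intro g
      rw [Matrix.diag]
      rw [LinearMap.toMatrix_apply]
      simp only [Finsupp.coe_basisSingleOne]
      rw [Finsupp.basisSingleOne_repr]
      simpa using hdiag g
    rw [Finset.sum_congr rfl (fun g _ => hentry g), Finset.sum_const, Finset.card_univ,
      nsmul_eq_mul, Nat.card_eq_fintype_card]
  rw [htr] at htr0
  rcases mul_eq_zero.mp htr0 with h | h
  · exact absurd h (IsUnit.ne_zero hke)
  · exact h

end St14

end Star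
section Main

open MonoidAlgebra

variable {M : Type*} [Monoid M] [Finite M] {k : Type*} [Field k]

namespace St14

lemma corner_mem_span (s f : M) (hf : f * f = f) (hfs : MsM f = MsM s)
    (hke : IsUnit ((Nat.card ↥(unitSet f) : k)))
    (z : MonoidAlgebra k M)
    (hz : ∀ a b : MonoidAlgebra k M, IsNilpotent (a * z * b)) :
    MonoidAlgebra.of k M f * z * MonoidAlgebra.of k M f ∈
      Submodule.span k (⇑(MonoidAlgebra.of k M) '' { x ∈ MsM s | MsM x ≠ MsM s }) := by
  classical
  set w : MonoidAlgebra k M := MonoidAlgebra.of k M f * z * MonoidAlgebra.of k M f with hw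
  have hsupp : ∀ y, w y ≠ 0 → y ∈ eMe f := by
    intro y hy
    by_contra hy'
    have hcs : w ∈ Submodule.span k (⇑(MonoidAlgebra.of k M) '' eMe f) :=
      of_mul_mul_of_mem_span (S := eMe f) (fun y _ => ⟨y, rfl⟩)
    exact hy (coeff_eq_zero_of_mem_span hcs hy')
  apply mem_span_of_coeff
  intro x hx
  have hxe : x ∈ eMe f := hsupp x hx
  have hxf1 : f * x = x := eMe_left hf hxe
  have hxf2 : x * f = x := eMe_right hf hxe
  have hxM : x ∈ MsM s := by
    rw [← hfs]
    obtain ⟨cc, hcc⟩ := hxe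
    exact ⟨f, cc * f, by rw [hcc]; simp [hf, mul_assoc]⟩
  refine ⟨hxM, ?_⟩
  intro hxx
  apply hx
  -- f ∈ MsM x, so x is a unit of fMf
  have hfmem : f ∈ MsM x := by
    rw [hxx, ← hfs]; exact mem_MsM_self f
  obtain ⟨a, b, hab⟩ := hfmem
  set α : M := f * a * f with hα_def
  set β : M := f * b * f with hβ_def
  have hα : α ∈ eMe f := ⟨a, rfl⟩
  have hβ : β ∈ eMe f := ⟨b, rfl⟩
  have hkey : (α * x) * β = f := by
    have h1 : α * x = f * a * x := by
      rw [hα_def, mul_assoc (f * a) f x, hxf1]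
    have h2 : x * β = x * b * f := by
      rw [hβ_def, ← mul_assoc x (f * b) f, ← mul_assoc x f b, hxf2]
    calc (α * x) * β = (f * a * x) * β := by rw [h1]
      _ = f * a * (x * β) := by rw [mul_assoc (f * a) x β]
      _ = f * a * (x * b * f) := by rw [h2]
      _ = f * (a * x * b) * f := by simp only [mul_assoc]
      _ = f * f * f := by rw [← hab]
      _ = f := by rw [hf, hf]
  have hαx_l : f * (α * x) = α * x := by rw [← mul_assoc, eMe_left hf hα]
  have hαx_r : (α * x) * f = α * x := by rw [mul_assoc, hxf2]
  have h6 : β * (α * x) = f :=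
    finite_inv hf hαx_l hαx_r (eMe_left hf hβ) hkey
  have h7 : (β * α) * x = f := by rw [mul_assoc]; exact h6
  have hβα_l : f * (β * α) = β * α := by rw [← mul_assoc, eMe_left hf hβ]
  have hβα_r : (β * α) * f = β * α := by rw [mul_assoc, eMe_right hf hα]
  have h8 : x * (β * α) = f := finite_inv hf hβα_l hβα_r hxf1 h7
  -- apply the corner coefficient lemma
  have hnil : IsNilpotent (MonoidAlgebra.of k M f * (MonoidAlgebra.of k M (β * α) * z) *
      MonoidAlgebra.of k M f) := by
    have := hz (MonoidAlgebra.of k M f * MonoidAlgebra.of k M (β * α)) (MonoidAlgebra.of k M f)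
    rwa [mul_assoc (MonoidAlgebra.of k M f) (MonoidAlgebra.of k M (β * α)) z] at this
  have hstar := coeff_corner_eq_zero f hf hke (MonoidAlgebra.of k M (β * α) * z) hnil
  have hid : MonoidAlgebra.of k M f * (MonoidAlgebra.of k M (β * α) * z) *
      MonoidAlgebra.of k M f = MonoidAlgebra.of k M (β * α) * w := by
    have e1 : MonoidAlgebra.of k M f * MonoidAlgebra.of k M (β * α)
        = MonoidAlgebra.of k M (β * α) := by
      rw [← map_mul, hβα_l]
    have e2 : MonoidAlgebra.of k M (β * α) * MonoidAlgebra.of k M f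
        = MonoidAlgebra.of k M (β * α) := by
      rw [← map_mul, hβα_r]
    calc MonoidAlgebra.of k M f * (MonoidAlgebra.of k M (β * α) * z) * MonoidAlgebra.of k M f
        = (MonoidAlgebra.of k M f * MonoidAlgebra.of k M (β * α)) * z
            * MonoidAlgebra.of k M f := by rw [mul_assoc (MonoidAlgebra.of k M f)
              (MonoidAlgebra.of k M (β * α)) z]
      _ = MonoidAlgebra.of k M (β * α) * z * MonoidAlgebra.of k M f := by rw [e1]
      _ = (MonoidAlgebra.of k M (β * α) * MonoidAlgebra.of k M f) * z
            * MonoidAlgebra.of k M f := by rw [e2]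
      _ = MonoidAlgebra.of k M (β * α) * w := by rw [hw]; simp only [mul_assoc]
  rw [hid] at hstar
  have hcoeff : (MonoidAlgebra.of k M (β * α) * w) f = w x := by
    apply of_mul_apply
    · exact h7
    · intro y hy hyy
      have hye : y ∈ eMe f := hsupp y hy
      have : x * ((β * α) * y) = x * f := by rw [hyy]
      rw [← mul_assoc, h8, eMe_left hf hye, hxf2] at this
      exact this
  rw [hcoeff] at hstar
  exact hstar

end St14

end Main

/-- Let `M` be a finite regular monoid and `k` a field such that
`|Γ_e|` is invertible in `k` for every idempotent `e ∈ M`.  If `u` lies in the Jacobson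
radical of `A := MonoidAlgebra k M` and `s, t ∈ M` satisfy `MsM = MtM`, then `s·u·t`
lies in the `k`-linear span of `{ x ∈ MsM : MxM ≠ MsM }`. -/
theorem statement14 {M : Type*} [Monoid M] [Finite M]
    (hreg : ∀ s : M, ∃ t : M, s * t * s = s)
    {k : Type*} [Field k]
    (hk : ∀ e : M, e * e = e → IsUnit ((Nat.card ↥(unitSet e) : k)))
    (u : MonoidAlgebra k M) (hu : u ∈ (⊥ : Ideal (MonoidAlgebra k M)).jacobson)
    (s t : M) (hst : MsM s = MsM t) :
    MonoidAlgebra.of k M s * u * MonoidAlgebra.of k M t ∈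
      Submodule.span k (⇑(MonoidAlgebra.of k M) '' { x ∈ MsM s | MsM x ≠ MsM s }) := by
  classical
  open St14 in
  obtain ⟨t₀, ht₀⟩ := hreg s
  obtain ⟨t₁, ht₁⟩ := hreg t
  set e : M := s * t₀ with he_def
  set f : M := t₁ * t with hf_def
  have he : e * e = e := by
    rw [he_def, ← mul_assoc, ht₀]
  have hes : e * s = s := ht₀
  have hf : f * f = f := by
    rw [hf_def, mul_assoc, ← mul_assoc t t₁ t, ht₁]
  have htf : t * f = t := by
    rw [hf_def, ← mul_assoc]; exact ht₁
  have hMe : MsM e = MsM s := by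
    apply Set.Subset.antisymm
    · exact St14.MsM_subset ⟨1, t₀, by simp [he_def]⟩
    · exact St14.MsM_subset ⟨1, s, by rw [one_mul, hes]⟩
  have hMf : MsM f = MsM s := by
    have h1 : MsM f ⊆ MsM t := St14.MsM_subset ⟨t₁, 1, by simp [hf_def]⟩
    have h2 : MsM t ⊆ MsM f := St14.MsM_subset ⟨t, 1, by rw [mul_one, htf]⟩
    rw [hst]
    exact Set.Subset.antisymm h1 h2
  have heMf : e ∈ MsM f := by
    have h1 : e ∈ MsM e := St14.mem_MsM_self e
    rwa [hMe, ← hMf] at h1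
  obtain ⟨p, q, hpq⟩ := heMf
  set y' : M := f * q * e with hy'_def
  have h1 : f * y' = y' := by
    rw [hy'_def, ← mul_assoc f (f * q) e, ← mul_assoc f f q, hf]
  have h2 : p * y' = e := by
    rw [hy'_def, ← mul_assoc p (f * q) e, ← mul_assoc p f q, ← hpq, he]
  set v : MonoidAlgebra k M := MonoidAlgebra.of k M s * u * MonoidAlgebra.of k M t with hv_def
  have hnil : ∀ a b : MonoidAlgebra k M, IsNilpotent (a * u * b) := by
    intro a b
    apply St14.isNilpotent_of_mem_jacobson
    have hmm : a * u ∈ (⊥ : Ideal (MonoidAlgebra k M)).jacobson :=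
      Ideal.mul_mem_left _ a hu
    rw [Ideal.jacobson_bot] at hmm ⊢
    exact Ideal.mul_mem_right b _ hmm
  have hv_span : v ∈ Submodule.span k (⇑(MonoidAlgebra.of k M) '' MsM s) :=
    St14.of_mul_mul_of_mem_span (S := MsM s)
      (fun y _ => ⟨1, y * t, by simp [mul_assoc]⟩)
  have hev : MonoidAlgebra.of k M e * v = v := by
    rw [hv_def, ← mul_assoc, ← mul_assoc, ← map_mul, hes]
  have hsupE : ∀ x, v x ≠ 0 → e * x = x := by
    intro x hx
    rw [← hev] at hx
    obtain ⟨y₁, y₂, hA, hB, hC⟩ := St14.exists_of_mul_coeff hx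
    have hy₁ : y₁ = e := St14.of_coeff_ne_zero hA
    rw [← hC, hy₁, ← mul_assoc, he]
  have hy'v : MonoidAlgebra.of k M y' * v ∈
      Submodule.span k (⇑(MonoidAlgebra.of k M) '' { x ∈ MsM s | MsM x ≠ MsM s }) := by
    have hys : y' * s = f * (q * s) := by
      rw [hy'_def, mul_assoc (f * q) e s, hes, mul_assoc]
    have hform : MonoidAlgebra.of k M y' * v =
        MonoidAlgebra.of k M f * (MonoidAlgebra.of k M (q * s) * u * MonoidAlgebra.of k M t)
          * MonoidAlgebra.of k M f := by
      have lhs1 : MonoidAlgebra.of k M y' * v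
          = MonoidAlgebra.of k M (y' * s) * u * MonoidAlgebra.of k M t := by
        rw [hv_def, ← mul_assoc, ← mul_assoc, ← map_mul]
      have rhs1 : MonoidAlgebra.of k M (y' * s)
          = MonoidAlgebra.of k M f * MonoidAlgebra.of k M (q * s) := by
        rw [← map_mul, hys]
      have rhs2 : MonoidAlgebra.of k M t * MonoidAlgebra.of k M f
          = MonoidAlgebra.of k M t := by rw [← map_mul, htf]
      rw [lhs1, rhs1]
      simp only [← mul_assoc]
      rw [mul_assoc _ (MonoidAlgebra.of k M t) (MonoidAlgebra.of k M f), rhs2]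
    rw [hform]
    exact St14.corner_mem_span s f hf hMf (hk f hf)
      (MonoidAlgebra.of k M (q * s) * u * MonoidAlgebra.of k M t)
      (fun a b => by
        have := hnil (a * MonoidAlgebra.of k M (q * s)) (MonoidAlgebra.of k M t * b)
        rw [show a * MonoidAlgebra.of k M (q * s) * u * (MonoidAlgebra.of k M t * b)
            = a * (MonoidAlgebra.of k M (q * s) * u * MonoidAlgebra.of k M t) * b by
          simp only [mul_assoc]] at this
        exact this)
  apply St14.mem_span_of_coeff
  intro x hx
  have hxM : x ∈ MsM s := by
    by_contra h
    exact hx (St14.coeff_eq_zero_of_mem_span hv_span h)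
  refine ⟨hxM, ?_⟩
  intro hxx
  apply hx
  have hex : e * x = x := hsupE x hx
  have hyx1 : y' * x ∈ MsM x := ⟨y', 1, by simp⟩
  have hyxM : MsM (y' * x) = MsM s := by
    apply Set.Subset.antisymm
    · rw [← hxx]
      exact St14.MsM_subset hyx1
    · have hxmem : x ∈ MsM (y' * x) := ⟨p, 1, by rw [mul_one, ← mul_assoc, h2, hex]⟩
      rw [← hxx]
      exact St14.MsM_subset hxmem
  have hyxL : y' * x ∉ { x ∈ MsM s | MsM x ≠ MsM s } := by
    rintro ⟨-, hne⟩
    exact hne hyxM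
  have h0 : (MonoidAlgebra.of k M y' * v) (y' * x) = 0 :=
    St14.coeff_eq_zero_of_mem_span hy'v hyxL
  have hE : (MonoidAlgebra.of k M y' * v) (y' * x) = v x := by
    apply St14.of_mul_apply v rfl
    intro y hy hyy
    have h3 : p * (y' * y) = p * (y' * x) := by rw [hyy]
    rw [← mul_assoc, h2, ← mul_assoc p y' x, h2, hex, hsupE y hy] at h3
    exact h3
  rw [hE] at h0
  exact h0
end

section
/- Let M be a finite monoid, k a field, and A := MonoidAlgebra k M. Let e, f ∈ M be idempotents and let s, t ∈ M satisfy s = e·s·f, t = f·t·e, e = s·t, and f = t·s. Then right multiplication by s defines an isomorphism of left A-modules A·e → A·f whose inverse is right multiplication by t, and this isomorphism maps A·kJ_e onto A·kJ_f, where kJ_e and kJ_f are the k-linear spans in A of J_e := eMe ∖ Γ_e and J_f := fMf ∖ Γ_f respectively. In particular, (A·e)/(A·kJ_e) ≅ (A·f)/(A·kJ_f) as left A-modules. -/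
section MonoidLemmas
variable {M : Type*} [Monoid M]

lemma ext2 {x y w : M} (h : x * y = w) (z : M) : x * (y * z) = w * z := by
  rw [← mul_assoc, h]

lemma eMe_left {e a : M} (he : e * e = e) (ha : a ∈ eMe e) : e * a = a := by
  obtain ⟨c, rfl⟩ := ha; simp only [mul_assoc]; rw [ext2 he]

lemma eMe_right {e a : M} (he : e * e = e) (ha : a ∈ eMe e) : a * e = a := by
  obtain ⟨c, rfl⟩ := ha; simp only [mul_assoc]; rw [he]

lemma left_abs {e f s : M} (hs : s = e * s * f) (he : e * e = e) : e * s = s := by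
  calc e * s = e * (e * s * f) := by rw [← hs]
    _ = e * s * f := by simp only [mul_assoc]; rw [ext2 he]
    _ = s := hs.symm

lemma right_abs {e f s : M} (hs : s = e * s * f) (hf : f * f = f) : s * f = s := by
  calc s * f = (e * s * f) * f := by rw [← hs]
    _ = e * s * f := by simp only [mul_assoc]; rw [hf]
    _ = s := hs.symm

lemma aux_Je {e f s t : M} (he : e * e = e) (hf : f * f = f) (hs : s = e * s * f)
    (ht : t = f * t * e) (hst : e = s * t) (hts : f = t * s) {a : M} (ha : a ∈ Je e) :
    t * a * s ∈ Je f ∧ a * s = s * (t * a * s) := by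
  obtain ⟨hmem, hnu⟩ := ha
  have hea := eMe_left he hmem
  have hae := eMe_right he hmem
  have hES := left_abs hs he
  have hSF := right_abs hs hf
  have hFT := left_abs ht hf
  have hTE := right_abs ht he
  have hmem' : t * a * s ∈ eMe f := ⟨t * a * s, by
    simp only [mul_assoc]; rw [hSF, ext2 hFT]⟩
  have h_as : a * s = s * (t * a * s) := by
    simp only [mul_assoc]; rw [ext2 hst.symm, ext2 hea]
  set b := t * a * s with hb
  have hta : t * a = b * t := by
    rw [hb]; simp only [mul_assoc]; rw [← hst, hae]
  refine ⟨⟨hmem', fun hbu => hnu ?_⟩, h_as⟩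
  obtain ⟨_, b', hb'mem, h1, h2⟩ := hbu
  refine ⟨hmem, s * b' * t, ⟨s * b' * t, ?_⟩, ?_, ?_⟩
  · simp only [mul_assoc]; rw [hTE, ext2 hES]
  · rw [← mul_assoc, ← mul_assoc, h_as, mul_assoc s b b', h1, hSF]
    exact hst.symm
  · rw [mul_assoc, hta, ← mul_assoc, mul_assoc s b' b, h2, hSF]
    exact hst.symm

end MonoidLemmas

section AlgebraLemmas
variable {M : Type*} [Monoid M] {k : Type*} [Field k]

local notation "A" => MonoidAlgebra k M
local notation "of" => MonoidAlgebra.of k M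

lemma mem_span_idem {g : M} (hg : g * g = g) (x : A) :
    x ∈ Submodule.span A {(of : M →* A) g} ↔ x * of g = x := by
  constructor
  · intro hx
    obtain ⟨c, rfl⟩ := Submodule.mem_span_singleton.mp hx
    rw [smul_eq_mul, mul_assoc, ← map_mul, hg]
  · intro hx
    exact hx ▸ Submodule.mem_span_singleton.mpr ⟨x, by rw [smul_eq_mul]⟩

lemma span_Je_le {g : M} (hg : g * g = g) :
    Submodule.span A (⇑(of) '' Je g) ≤ Submodule.span A {(of : M →* A) g} := by
  rw [Submodule.span_le]
  rintro _ ⟨a, ha, rfl⟩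
  refine (mem_span_idem hg _).mpr ?_
  rw [← map_mul, eMe_right hg ha.1]

lemma map_span_Je {e f s t : M} (he : e * e = e) (hf : f * f = f) (hs : s = e * s * f)
    (ht : t = f * t * e) (hst : e = s * t) (hts : f = t * s) :
    (Submodule.span A (⇑(of) '' Je e)).map
        (LinearMap.toSpanSingleton A A (of s)) =
      Submodule.span A (⇑(of) '' Je f) := by
  rw [Submodule.map_span]
  apply le_antisymm
  · rw [Submodule.span_le]
    rintro _ ⟨_, ⟨a, ha, rfl⟩, rfl⟩
    obtain ⟨hbJ, has⟩ := aux_Je he hf hs ht hst hts ha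
    show (LinearMap.toSpanSingleton A A (of s)) (of a) ∈ _
    rw [LinearMap.toSpanSingleton_apply, smul_eq_mul, ← map_mul, has, map_mul,
      ← smul_eq_mul]
    exact Submodule.smul_mem _ _ (Submodule.subset_span ⟨_, hbJ, rfl⟩)
  · rw [Submodule.span_le]
    rintro _ ⟨b, hb, rfl⟩
    obtain ⟨hcJ, hbt⟩ := aux_Je hf he ht hs hts hst hb
    have key : (of : M →* A) b =
        (of t) • (LinearMap.toSpanSingleton A A (of s) (of (s * b * t))) := by
      rw [LinearMap.toSpanSingleton_apply, smul_eq_mul, smul_eq_mul, ← map_mul,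
        ← map_mul]
      congr 1
      simp only [mul_assoc]
      rw [← hts, eMe_right hf hb.1, ext2 hts.symm, eMe_left hf hb.1]
    rw [key]
    exact Submodule.smul_mem _ _
      (Submodule.subset_span ⟨(of : M →* A) (s * b * t), ⟨_, hcJ, rfl⟩, rfl⟩)

end AlgebraLemmas

/-- Let `M` be a finite monoid, `k` a field, `A := MonoidAlgebra k M`.
Let `e, f ∈ M` be idempotents and `s, t ∈ M` with `s = e·s·f`, `t = f·t·e`, `e = s·t`
and `f = t·s`.  Then right multiplication by `s` defines an isomorphism of left
`A`-modules `A·e → A·f` with inverse given by right multiplication by `t`, it maps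
`A·kJ_e` onto `A·kJ_f`, and in particular `(A·e)/(A·kJ_e) ≅ (A·f)/(A·kJ_f)` as left
`A`-modules. -/
theorem statement17 {M : Type*} [Monoid M] [Finite M]
    {k : Type*} [Field k]
    (e f s t : M) (he : e * e = e) (hf : f * f = f)
    (hs : s = e * s * f) (ht : t = f * t * e) (hst : e = s * t) (hts : f = t * s) :
    ∀ Ae Af Ke Kf : Submodule (MonoidAlgebra k M) (MonoidAlgebra k M),
      Ae = Submodule.span (MonoidAlgebra k M) {MonoidAlgebra.of k M e} →
      Af = Submodule.span (MonoidAlgebra k M) {MonoidAlgebra.of k M f} →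
      Ke = Submodule.span (MonoidAlgebra k M) (⇑(MonoidAlgebra.of k M) '' Je e) →
      Kf = Submodule.span (MonoidAlgebra k M) (⇑(MonoidAlgebra.of k M) '' Je f) →
      (∀ x ∈ Ae, x * MonoidAlgebra.of k M s ∈ Af) ∧
      (∀ y ∈ Af, y * MonoidAlgebra.of k M t ∈ Ae) ∧
      (∀ x ∈ Ae, x * MonoidAlgebra.of k M s * MonoidAlgebra.of k M t = x) ∧
      (∀ y ∈ Af, y * MonoidAlgebra.of k M t * MonoidAlgebra.of k M s = y) ∧
      (fun x : MonoidAlgebra k M => x * MonoidAlgebra.of k M s) '' (Ke : Set _) =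
        (Kf : Set _) ∧
      Nonempty
        ((↥Ae ⧸ Submodule.comap Ae.subtype Ke) ≃ₗ[MonoidAlgebra k M]
          (↥Af ⧸ Submodule.comap Af.subtype Kf)) := by
  intro Ae Af Ke Kf hAe hAf hKe hKf
  subst hAe hAf hKe hKf
  set A := MonoidAlgebra k M
  set Of := MonoidAlgebra.of k M with hOf
  have hES := left_abs hs he
  have hSF := right_abs hs hf
  have hFT := left_abs ht hf
  have hTE := right_abs ht he
  have P1 : ∀ x ∈ Submodule.span A {Of e}, x * Of s ∈ Submodule.span A {Of f} := by
    intro x hx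
    refine (mem_span_idem hf _).mpr ?_
    rw [mul_assoc, ← map_mul, hSF]
  have P2 : ∀ y ∈ Submodule.span A {Of f}, y * Of t ∈ Submodule.span A {Of e} := by
    intro y hy
    refine (mem_span_idem he _).mpr ?_
    rw [mul_assoc, ← map_mul, hTE]
  have P3 : ∀ x ∈ Submodule.span A {Of e}, x * Of s * Of t = x := by
    intro x hx
    rw [mul_assoc, ← map_mul, ← hst]
    exact (mem_span_idem he x).mp hx
  have P4 : ∀ y ∈ Submodule.span A {Of f}, y * Of t * Of s = y := by
    intro y hy
    rw [mul_assoc, ← map_mul, ← hts]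
    exact (mem_span_idem hf y).mp hy
  have hρ := map_span_Je (k := k) he hf hs ht hst hts
  have hρ' := map_span_Je (k := k) hf he ht hs hts hst
  have hfun : (fun x : A => x * Of s) = ⇑(LinearMap.toSpanSingleton A A (Of s)) := by
    funext x
    rw [LinearMap.toSpanSingleton_apply, smul_eq_mul]
  have P5 : (fun x : A => x * Of s) '' (Submodule.span A (⇑Of '' Je e) : Set A) =
      (Submodule.span A (⇑Of '' Je f) : Set A) := by
    rw [hfun, ← Submodule.map_coe, hρ]
  refine ⟨P1, P2, P3, P4, P5, ?_⟩
  have hKeAe : Submodule.span A (⇑Of '' Je e) ≤ Submodule.span A {Of e} := span_Je_le he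
  have hKfAf : Submodule.span A (⇑Of '' Je f) ≤ Submodule.span A {Of f} := span_Je_le hf
  set Ae := Submodule.span A {Of e}
  set Af := Submodule.span A {Of f}
  set Ke := Submodule.span A (⇑Of '' Je e)
  set Kf := Submodule.span A (⇑Of '' Je f)
  let E : ↥Ae ≃ₗ[A] ↥Af :=
    { toFun := fun x => ⟨(x : A) * Of s, P1 _ x.2⟩
      map_add' := fun x y => Subtype.ext (add_mul _ _ _)
      map_smul' := fun r x => Subtype.ext (by
        show ((r • x : Ae) : A) * Of s = r • ((x : A) * Of s)
        rw [Submodule.coe_smul, smul_eq_mul, smul_eq_mul, mul_assoc])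
      invFun := fun y => ⟨(y : A) * Of t, P2 _ y.2⟩
      left_inv := fun x => Subtype.ext (P3 _ x.2)
      right_inv := fun y => Subtype.ext (P4 _ y.2) }
  refine ⟨Submodule.Quotient.equiv _ _ E ?_⟩
  ext y
  simp only [Submodule.mem_map, Submodule.mem_comap, Submodule.subtype_apply]
  constructor
  · rintro ⟨x, hx, hxy⟩
    have hval : (x : A) * Of s = (y : A) := congrArg Subtype.val hxy
    have h2 : LinearMap.toSpanSingleton A A (Of s) (x : A) ∈ Kf := by
      rw [← hρ]
      exact Submodule.mem_map_of_mem hx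
    rwa [LinearMap.toSpanSingleton_apply, smul_eq_mul, hval] at h2
  · intro h
    have hmem : (y : A) * Of t ∈ Ke := by
      have h2 : LinearMap.toSpanSingleton A A (Of t) (y : A) ∈ Ke := by
        rw [← hρ']
        exact Submodule.mem_map_of_mem h
      rwa [LinearMap.toSpanSingleton_apply, smul_eq_mul] at h2
    exact ⟨⟨(y : A) * Of t, P2 _ y.2⟩, hmem, Subtype.ext (P4 _ y.2)⟩
end
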